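/- arXiv:1503.01165 — 5 statements merged into one kernel-verified Lean document; each statement's English description precedes it below -/
import Mathlib

section
/- For all integers k and n with n ≥ k+1 and at least one of k, n even, there exists a k-regular simple graph of order n each of whose connected components has at most 2k+1 vertices. -/
open SimpleGraph

section Aux

variable {α β : Type*}

/-- A circulant-type graph from a symmetric jump set avoiding `0`. -/
private def circGraph {m : ℕ} [NeZero m] (s : Finset (ZMod m)) (h0 : (0 : ZMod m) ∉ s)
    (hsym : ∀ x ∈ s, -x ∈ s) : SimpleGraph (ZMod m) where
  Adj u v := u - v ∈ s
  symm.symm u v h := by simpa [neg_sub] using hsym _ h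
  loopless.irrefl u h := h0 (by simpa using h)

private lemma circGraph_regular {m : ℕ} [NeZero m] (s : Finset (ZMod m))
    (h0 : (0 : ZMod m) ∉ s) (hsym : ∀ x ∈ s, -x ∈ s) :
    letI : DecidableRel (circGraph s h0 hsym).Adj :=
      fun u v => inferInstanceAs (Decidable (u - v ∈ s))
    (circGraph s h0 hsym).IsRegularOfDegree s.card := by
  intro v
  letI : DecidableRel (circGraph s h0 hsym).Adj :=
    fun u v => inferInstanceAs (Decidable (u - v ∈ s))
  have himg : (circGraph s h0 hsym).neighborFinset v = s.image (fun x => v - x) := by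
    ext w
    simp only [mem_neighborFinset, Finset.mem_image]
    constructor
    · intro h
      exact ⟨v - w, h, by ring⟩
    · rintro ⟨x, hx, rfl⟩
      show v - (v - x) ∈ s
      simpa using hx
  rw [SimpleGraph.degree, ← Finset.card_image_of_injective s (sub_right_injective (G := ZMod m) (b := v)), ← himg]
  convert rfl

/-- Existence of a suitable symmetric jump set of size `k` in `ZMod m`. -/
private lemma exists_jumps (k m : ℕ) [NeZero m] (hk : k < m) (hpar : Even k ∨ Even m) :
    ∃ s : Finset (ZMod m), (0 : ZMod m) ∉ s ∧ (∀ x ∈ s, -x ∈ s) ∧ s.card = k := by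
  set a := k / 2 with ha
  have hm0 : 0 < m := Nat.pos_of_ne_zero (NeZero.ne m)
  have hval : ∀ i ∈ Finset.Icc 1 a, ((i : ZMod m)).val = i := by
    intro i hi
    simp only [Finset.mem_Icc] at hi
    rw [ZMod.val_natCast, Nat.mod_eq_of_lt (by omega)]
  set I : Finset (ZMod m) := (Finset.Icc 1 a).image (fun i : ℕ => (i : ZMod m)) with hI
  have hIcard : I.card = a := by
    rw [hI, Finset.card_image_of_injOn, Nat.card_Icc]
    · omega
    · intro i hi j hj hij
      have h1 := hval i (by simpa using hi)
      have h2 := hval j (by simpa using hj)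
      have := congrArg ZMod.val hij
      simpa [h1, h2] using this
  have hmemI : ∀ x ∈ I, 1 ≤ x.val ∧ x.val ≤ a := by
    intro x hx
    rw [hI, Finset.mem_image] at hx
    obtain ⟨i, hi, rfl⟩ := hx
    have h1 := hval i hi
    simp only [Finset.mem_Icc] at hi
    omega
  have h0I : (0 : ZMod m) ∉ I := by
    intro h
    have := hmemI 0 h
    simp [ZMod.val_zero] at this
  set J : Finset (ZMod m) := I ∪ I.image Neg.neg with hJ
  have hdisj : Disjoint I (I.image Neg.neg) := by
    rw [Finset.disjoint_left]
    intro x hx hx'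
    rw [Finset.mem_image] at hx'
    obtain ⟨y, hy, hxy⟩ := hx'
    have hxv := hmemI x hx
    have hyv := hmemI y hy
    have : x + y = 0 := by rw [← hxy]; ring
    have hvadd : (x.val + y.val : ℕ) < m := by omega
    have : ((x.val + y.val : ℕ) : ZMod m) = 0 := by
      push_cast
      rw [ZMod.natCast_val, ZMod.natCast_val, ZMod.cast_id, ZMod.cast_id]
      exact this
    rw [ZMod.natCast_eq_zero_iff] at this
    have := Nat.le_of_dvd (by omega) this
    omega
  have hJcard : J.card = 2 * a := by
    rw [hJ, Finset.card_union_of_disjoint hdisj,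
      Finset.card_image_of_injective _ neg_injective, hIcard]
    omega
  have hJsym : ∀ x ∈ J, -x ∈ J := by
    intro x hx
    rw [hJ, Finset.mem_union] at hx ⊢
    rcases hx with hx | hx
    · exact Or.inr (Finset.mem_image_of_mem _ hx)
    · rw [Finset.mem_image] at hx
      obtain ⟨y, hy, rfl⟩ := hx
      exact Or.inl (by simpa using hy)
  have h0J : (0 : ZMod m) ∉ J := by
    rw [hJ, Finset.mem_union]
    rintro (h | h)
    · exact h0I h
    · rw [Finset.mem_image] at h
      obtain ⟨y, hy, hy0⟩ := h
      have : y = 0 := by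
        have : -y = 0 := hy0
        simpa [neg_eq_zero] using this
      exact h0I (this ▸ hy)
  rcases Nat.even_or_odd k with hke | hko
  · -- k even
    refine ⟨J, h0J, hJsym, ?_⟩
    obtain ⟨t, ht⟩ := hke
    rw [hJcard]
    omega
  · -- k odd, hence m even
    have hme : Even m := by
      rcases hpar with h | h
      · exact absurd h (Nat.not_even_iff_odd.mpr hko)
      · exact h
    obtain ⟨t, ht⟩ := hme
    obtain ⟨u, hu⟩ := hko
    have hk2a : k = 2 * a + 1 := by omega
    have hm2 : m / 2 = t := by omega
    have hta : a + 1 ≤ t := by omega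
    set h : ZMod m := ((t : ℕ) : ZMod m) with hh
    have hhval : h.val = t := by
      rw [hh, ZMod.val_natCast, Nat.mod_eq_of_lt (by omega)]
    have hneg : -h = h := by
      have : h + h = 0 := by
        rw [hh, ← Nat.cast_add]
        rw [ZMod.natCast_eq_zero_iff]
        exact ⟨1, by omega⟩
      exact neg_eq_of_add_eq_zero_left this
    have hhJ : h ∉ J := by
      rw [hJ, Finset.mem_union]
      rintro (hx | hx)
      · have := hmemI h hx
        omega
      · rw [Finset.mem_image] at hx
        obtain ⟨y, hy, hyh⟩ := hx
        have : -h = y := by rw [← hyh, neg_neg]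
        rw [hneg] at this
        have := hmemI h (this ▸ hy)
        omega
    refine ⟨insert h J, ?_, ?_, ?_⟩
    · rw [Finset.mem_insert]
      rintro (h0 | h0)
      · rw [← h0] at hhval
        rw [ZMod.val_zero] at hhval
        omega
      · exact h0J h0
    · intro x hx
      rw [Finset.mem_insert] at hx ⊢
      rcases hx with rfl | hx
      · exact Or.inl hneg
      · exact Or.inr (hJsym x hx)
    · rw [Finset.card_insert_of_notMem hhJ, hJcard]
      omega

/-- Trivial bound: any component support has at most `Fintype.card` elements. -/
private lemma supp_ncard_le_card {G : SimpleGraph α} [Fintype α]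
    (c : G.ConnectedComponent) : c.supp.ncard ≤ Fintype.card α := by
  have := Set.ncard_le_ncard (Set.subset_univ c.supp) (Set.toFinite _)
  simpa [Set.ncard_univ, Nat.card_eq_fintype_card] using this

/-- Transfer regularity and component bounds along an equivalence of vertex types. -/
private lemma transfer {n C k : ℕ} [Fintype α] (e : Fin n ≃ α) (G : SimpleGraph α)
    (hdec : DecidableRel G.Adj) (hreg : G.IsRegularOfDegree k)
    (hcomp : ∀ c : G.ConnectedComponent, c.supp.ncard ≤ C) :
    ∃ (G' : SimpleGraph (Fin n)) (_ : DecidableRel G'.Adj), G'.IsRegularOfDegree k ∧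
      ∀ c : G'.ConnectedComponent, c.supp.ncard ≤ C := by
  classical
  refine ⟨G.comap e, fun a b => hdec _ _, ?_, ?_⟩
  · intro v
    have φ := SimpleGraph.Iso.comap e G
    rw [← card_neighborSet_eq_degree, Fintype.card_congr (φ.mapNeighborSet v),
      card_neighborSet_eq_degree]
    exact hreg _
  · intro c
    have φ := (SimpleGraph.Iso.comap e G).symm
    obtain ⟨c₀, rfl⟩ := φ.connectedComponentEquiv.surjective c
    have hcard := Nat.card_congr (ConnectedComponent.isoEquivSupp φ c₀)
    rw [← Nat.card_coe_set_eq, ← hcard, Nat.card_coe_set_eq]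
    exact hcomp c₀

private lemma sum_reach_inl {G : SimpleGraph α} {H : SimpleGraph β} {u : α} {x : α ⊕ β}
    (h : (G ⊕g H).Reachable (Sum.inl u) x) : ∃ w, x = Sum.inl w ∧ G.Reachable u w := by
  obtain ⟨p⟩ := h
  suffices H : ∀ (y x : α ⊕ β) (_ : (G ⊕g H).Walk y x) (u : α), y = Sum.inl u →
      ∃ w, x = Sum.inl w ∧ G.Reachable u w by
    exact H _ _ p u rfl
  intro y x p
  induction p with
  | nil => exact fun u hu => ⟨u, hu, Reachable.refl u⟩
  | cons adj p ih =>
    rintro u rfl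
    rename_i y z _
    match z, adj with
    | Sum.inl z, adj =>
      obtain ⟨w, rfl, hr⟩ := ih z rfl
      have hadj : G.Adj u z := by simpa using adj
      exact ⟨w, rfl, hadj.reachable.trans hr⟩
    | Sum.inr z, adj => simp at adj

private lemma sum_reach_inr {G : SimpleGraph α} {H : SimpleGraph β} {u : β} {x : α ⊕ β}
    (h : (G ⊕g H).Reachable (Sum.inr u) x) : ∃ w, x = Sum.inr w ∧ H.Reachable u w := by
  obtain ⟨p⟩ := h
  suffices H' : ∀ (y x : α ⊕ β) (_ : (G ⊕g H).Walk y x) (u : β), y = Sum.inr u →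
      ∃ w, x = Sum.inr w ∧ H.Reachable u w by
    exact H' _ _ p u rfl
  intro y x p
  induction p with
  | nil => exact fun u hu => ⟨u, hu, Reachable.refl u⟩
  | cons adj p ih =>
    rintro u rfl
    rename_i y z _
    match z, adj with
    | Sum.inr z, adj =>
      obtain ⟨w, rfl, hr⟩ := ih z rfl
      have hadj : H.Adj u z := by simpa using adj
      exact ⟨w, rfl, hadj.reachable.trans hr⟩
    | Sum.inl z, adj => simp at adj

private lemma sum_comp_bound {C : ℕ} [Fintype α] [Fintype β]
    {G : SimpleGraph α} {H : SimpleGraph β}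
    (hG : ∀ c : G.ConnectedComponent, c.supp.ncard ≤ C)
    (hH : ∀ c : H.ConnectedComponent, c.supp.ncard ≤ C) :
    ∀ c : (G ⊕g H).ConnectedComponent, c.supp.ncard ≤ C := by
  intro c
  obtain ⟨v, rfl⟩ := c.exists_rep
  cases v with
  | inl u =>
    have hsub : ((G ⊕g H).connectedComponentMk (Sum.inl u)).supp ⊆
        Sum.inl '' (G.connectedComponentMk u).supp := by
      intro x hx
      rw [ConnectedComponent.mem_supp_iff, ConnectedComponent.eq] at hx
      obtain ⟨w, rfl, hr⟩ := sum_reach_inl hx.symm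
      exact ⟨w, by rw [ConnectedComponent.mem_supp_iff, ConnectedComponent.eq]; exact hr.symm, rfl⟩
    calc _ ≤ (Sum.inl '' (G.connectedComponentMk u).supp).ncard :=
          Set.ncard_le_ncard hsub (Set.toFinite _)
      _ = (G.connectedComponentMk u).supp.ncard :=
          Set.ncard_image_of_injective _ Sum.inl_injective
      _ ≤ C := hG _
  | inr u =>
    have hsub : ((G ⊕g H).connectedComponentMk (Sum.inr u)).supp ⊆
        Sum.inr '' (H.connectedComponentMk u).supp := by
      intro x hx
      rw [ConnectedComponent.mem_supp_iff, ConnectedComponent.eq] at hx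
      obtain ⟨w, rfl, hr⟩ := sum_reach_inr hx.symm
      exact ⟨w, by rw [ConnectedComponent.mem_supp_iff, ConnectedComponent.eq]; exact hr.symm, rfl⟩
    calc _ ≤ (Sum.inr '' (H.connectedComponentMk u).supp).ncard :=
          Set.ncard_le_ncard hsub (Set.toFinite _)
      _ = (H.connectedComponentMk u).supp.ncard :=
          Set.ncard_image_of_injective _ Sum.inr_injective
      _ ≤ C := hH _

private def sumDecRel {G : SimpleGraph α} {H : SimpleGraph β}
    (dG : DecidableRel G.Adj) (dH : DecidableRel H.Adj) : DecidableRel (G ⊕g H).Adj :=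
  fun u v =>
    match u, v with
    | Sum.inl u, Sum.inl v => (dG u v : Decidable (G.Adj u v))
    | Sum.inr u, Sum.inr v => (dH u v : Decidable (H.Adj u v))
    | Sum.inl u, Sum.inr v => Decidable.isFalse (by simp)
    | Sum.inr u, Sum.inl v => Decidable.isFalse (by simp)

private lemma sum_neighborFinset_inl [Fintype α] [Fintype β] [DecidableEq α] [DecidableEq β]
    {G : SimpleGraph α} {H : SimpleGraph β} [DecidableRel G.Adj] [DecidableRel H.Adj]
    [DecidableRel (G ⊕g H).Adj] (u : α) :
    (G ⊕g H).neighborFinset (Sum.inl u) =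
      (G.neighborFinset u).map ⟨Sum.inl, Sum.inl_injective⟩ := by
  ext w
  cases w <;> simp [mem_neighborFinset]

private lemma sum_neighborFinset_inr [Fintype α] [Fintype β] [DecidableEq α] [DecidableEq β]
    {G : SimpleGraph α} {H : SimpleGraph β} [DecidableRel G.Adj] [DecidableRel H.Adj]
    [DecidableRel (G ⊕g H).Adj] (u : β) :
    (G ⊕g H).neighborFinset (Sum.inr u) =
      (H.neighborFinset u).map ⟨Sum.inr, Sum.inr_injective⟩ := by
  ext w
  cases w <;> simp [mem_neighborFinset]

private lemma sum_regular {k : ℕ} [Fintype α] [Fintype β] [DecidableEq α] [DecidableEq β]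
    {G : SimpleGraph α} {H : SimpleGraph β} [DecidableRel G.Adj] [DecidableRel H.Adj]
    [DecidableRel (G ⊕g H).Adj]
    (hG : G.IsRegularOfDegree k) (hH : H.IsRegularOfDegree k) :
    (G ⊕g H).IsRegularOfDegree k := by
  intro v
  cases v with
  | inl u => rw [SimpleGraph.degree, sum_neighborFinset_inl, Finset.card_map]; exact hG u
  | inr u => rw [SimpleGraph.degree, sum_neighborFinset_inr, Finset.card_map]; exact hH u

end Aux

/-- For all `k, n` with `n ≥ k + 1` and `k` or `n` even, there is a `k`-regular
graph of order `n` each of whose connected components has at most `2 * k + 1` vertices. -/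
theorem exists_regular_graph_small_components (k n : ℕ) (hn : k + 1 ≤ n)
    (hpar : Even k ∨ Even n) :
    ∃ (G : SimpleGraph (Fin n)) (_ : DecidableRel G.Adj),
      G.IsRegularOfDegree k ∧
      ∀ c : G.ConnectedComponent, c.supp.ncard ≤ 2 * k + 1 := by
  classical
  induction n using Nat.strong_induction_on with
  | _ n ih =>
  by_cases hsmall : n ≤ 2 * k + 1
  · -- single circulant block
    haveI : NeZero n := ⟨by omega⟩
    obtain ⟨s, h0, hsym, hcard⟩ := exists_jumps k n (by omega) hpar
    letI dec : DecidableRel (circGraph s h0 hsym).Adj :=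
      fun u v => inferInstanceAs (Decidable (u - v ∈ s))
    have hreg : (circGraph s h0 hsym).IsRegularOfDegree k := by
      have := circGraph_regular s h0 hsym
      rw [hcard] at this
      convert this using 2
    have hcomp : ∀ c : (circGraph s h0 hsym).ConnectedComponent, c.supp.ncard ≤ 2 * k + 1 := by
      intro c
      have := supp_ncard_le_card c
      have hzc : Fintype.card (ZMod n) = n := ZMod.card n
      omega
    have e : Fin n ≃ ZMod n := Fintype.equivOfCardEq (by simp [ZMod.card])
    exact transfer e _ dec hreg hcomp
  · -- split off a complete block of size k + 1
    push_neg at hsmall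
    set b := n - (k + 1) with hb
    have hbn : k + 1 + b = n := by omega
    have hble : k + 1 ≤ b := by omega
    have hpar' : Even k ∨ Even b := by
      rcases hpar with h | h
      · exact Or.inl h
      · rcases Nat.even_or_odd k with hk | hk
        · exact Or.inl hk
        · right
          obtain ⟨p, hp⟩ := h
          obtain ⟨q, hq⟩ := hk
          exact ⟨p - (q + 1), by omega⟩
    obtain ⟨G₂, dec₂, hreg₂, hcomp₂⟩ := ih b (by omega) (by omega) hpar'
    letI := dec₂
    set G₁ : SimpleGraph (Fin (k + 1)) := ⊤ with hG₁
    have hreg₁ : G₁.IsRegularOfDegree k := by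
      have := SimpleGraph.IsRegularOfDegree.top (V := Fin (k + 1))
      simpa using this
    have hcomp₁ : ∀ c : G₁.ConnectedComponent, c.supp.ncard ≤ 2 * k + 1 := by
      intro c
      have := supp_ncard_le_card c
      simp only [Fintype.card_fin] at this
      omega
    letI decS : DecidableRel (G₁ ⊕g G₂).Adj := sumDecRel inferInstance dec₂
    have hregS : (G₁ ⊕g G₂).IsRegularOfDegree k := sum_regular hreg₁ hreg₂
    have hcompS : ∀ c : (G₁ ⊕g G₂).ConnectedComponent, c.supp.ncard ≤ 2 * k + 1 :=
      sum_comp_bound hcomp₁ hcomp₂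
    have e : Fin n ≃ Fin (k + 1) ⊕ Fin b := (finCongr hbn.symm).trans finSumFinEquiv.symm
    exact transfer e _ decS (by convert hregS) hcompS
end

section
/- Let n, m be integers with 6 ≤ m ≤ 2n−2 and m even, and set θ = 1 if both n and m/2 are even and θ = 0 otherwise. Then R(K_{1,n}, W_m) ≥ 2n + m/2 − θ, where W_m is the wheel obtained by joining a new vertex to all vertices of a cycle C_m. -/
open SimpleGraph

/-- `G` contains a copy of `H` (as a subgraph). -/
def HasCopy {α β : Type*} (G : SimpleGraph α) (H : SimpleGraph β) : Prop :=
  ∃ f : H →g G, Function.Injective f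

/-- The wheel `W m`: a cycle `C m` together with a hub (`none`) adjacent to all cycle vertices. -/
def wheelGraph (m : ℕ) : SimpleGraph (Option (Fin m)) where
  Adj x y :=
    match x, y with
    | some a, some b => (cycleGraph m).Adj a b
    | some _, none => True
    | none, some _ => True
    | none, none => False
  symm := by
    constructor
    intro x y h
    match x, y with
    | some a, some b => exact (cycleGraph m).adj_symm h
    | some _, none => trivial
    | none, some _ => trivial
  loopless := by
    constructor
    intro x h
    match x with
    | some a => exact (cycleGraph m).irrefl h
    | none => exact h

/-- The star `K_{1,n}`. -/
def starGraph (n : ℕ) : SimpleGraph (Unit ⊕ Fin n) := completeBipartiteGraph Unit (Fin n)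

/-- `r` is a Ramsey number for the pair `(G₁, G₂)`. -/
def IsRamsey {α β : Type*} (G₁ : SimpleGraph α) (G₂ : SimpleGraph β) (r : ℕ) : Prop :=
  ∀ G : SimpleGraph (Fin r), HasCopy G G₁ ∨ HasCopy Gᶜ G₂

/-- The Ramsey number `R(G₁, G₂)`. -/
noncomputable def ramseyNumber {α β : Type*} (G₁ : SimpleGraph α) (G₂ : SimpleGraph β) : ℕ :=
  sInf {r | IsRamsey G₁ G₂ r}

namespace StarWheelProof

/-- If some vertex has `n` neighbours, we get a copy of the star. -/
lemma hasCopy_star_of_degree {V : Type*} [Fintype V] [DecidableEq V] {G : SimpleGraph V}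
    [DecidableRel G.Adj] {n : ℕ} {v : V} (h : n ≤ G.degree v) :
    HasCopy G (_root_.starGraph n) := by
  obtain ⟨S, hSsub, hScard⟩ := Finset.exists_subset_card_eq h
  let e : Fin n → V := fun i => (S.equivFin.symm (finCongr hScard.symm i) : V)
  have he_mem : ∀ i, e i ∈ S := fun i => (S.equivFin.symm (finCongr hScard.symm i)).2
  have he_inj : Function.Injective e := by
    intro i j hij
    exact (finCongr hScard.symm).injective (S.equivFin.symm.injective (Subtype.ext hij))
  have he_adj : ∀ i, G.Adj v (e i) := fun i =>
    (SimpleGraph.mem_neighborFinset G v (e i)).mp (hSsub (he_mem i))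
  refine ⟨⟨Sum.elim (fun _ => v) e, ?_⟩, ?_⟩
  · rintro (a | a) (b | b) hab
    · simp [_root_.starGraph] at hab
    · exact he_adj b
    · exact (he_adj a).symm
    · simp [_root_.starGraph] at hab
  · rintro (a | a) (b | b) hab
    · simp
    · exact absurd (hab : v = e b) (fun hh => G.ne_of_adj (he_adj b) hh)
    · exact absurd (hab : e a = v) (fun hh => G.ne_of_adj (he_adj a) hh.symm)
    · simp only [Sum.inr.injEq]
      exact he_inj hab

/-- Greedy clique extraction from a graph with large minimal degree. -/
lemma exists_clique {V : Type*} [Fintype V] [DecidableEq V] (H : SimpleGraph V)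
    [DecidableRel H.Adj] (c : ℕ) (hdeg : ∀ v, Fintype.card V ≤ H.degree v + c) :
    ∀ k : ℕ, (∀ j, j < k → j * c < Fintype.card V) →
      ∃ t : Finset V, t.card = k ∧ ∀ x ∈ t, ∀ y ∈ t, x ≠ y → H.Adj x y := by
  have main : ∀ k : ℕ, (∀ j, j < k → j * c < Fintype.card V) →
      ∃ t T : Finset V, t.card = k ∧ (∀ x ∈ t, ∀ y ∈ t, x ≠ y → H.Adj x y) ∧
        (∀ w ∈ T, ∀ x ∈ t, H.Adj x w) ∧ Fintype.card V ≤ T.card + k * c := by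
    intro k
    induction k with
    | zero =>
      intro _
      exact ⟨∅, Finset.univ, rfl, by simp, by simp, by simp [Finset.card_univ]⟩
    | succ k ih =>
      intro hk
      obtain ⟨t, T, hcard, hclique, hTt, hbound⟩ := ih (fun j hj => hk j (by omega))
      have hTne : T.Nonempty := by
        rw [← Finset.card_pos]
        have := hk k (by omega)
        omega
      obtain ⟨w, hw⟩ := hTne
      have hwt : w ∉ t := fun hmem => H.irrefl (hTt w hw w hmem)
      refine ⟨insert w t, T ∩ H.neighborFinset w, ?_, ?_, ?_, ?_⟩
      · rw [Finset.card_insert_of_notMem hwt, hcard]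
      · intro x hx y hy hxy
        rcases Finset.mem_insert.mp hx with h | hx
        · rcases Finset.mem_insert.mp hy with h' | hy'
          · exact absurd (h.trans h'.symm) hxy
          · rw [h]; exact (hTt _ hw _ hy').symm
        · rcases Finset.mem_insert.mp hy with h' | hy'
          · rw [h']; exact hTt _ hw _ hx
          · exact hclique _ hx _ hy' hxy
      · intro u hu x hx
        rcases Finset.mem_inter.mp hu with ⟨huT, huN⟩
        rcases Finset.mem_insert.mp hx with h | hx
        · rw [h]; exact (SimpleGraph.mem_neighborFinset H w u).mp huN
        · exact hTt u huT x hx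
      · have hsplit := Finset.card_inter_add_card_sdiff T (H.neighborFinset w)
        have hsdiff : (T \ H.neighborFinset w).card ≤ Fintype.card V - H.degree w := by
          have hsub : T \ H.neighborFinset w ⊆ Finset.univ \ H.neighborFinset w :=
            Finset.sdiff_subset_sdiff (Finset.subset_univ _) le_rfl
          have := Finset.card_le_card hsub
          rwa [Finset.card_sdiff_of_subset (Finset.subset_univ _), Finset.card_univ] at this
        have hdw := hdeg w
        have hdlt : H.degree w ≤ Fintype.card V := by
          have := H.degree_lt_card_verts w
          omega
        have : Fintype.card V - H.degree w ≤ c := by omega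
        have hmul : (k + 1) * c = k * c + c := by ring
        omega
  intro k hk
  obtain ⟨t, _, h1, h2, _, _⟩ := main k hk
  exact ⟨t, h1, h2⟩

/-- A clique on `m+1` vertices contains the wheel `W m`. -/
lemma hasCopy_wheel_of_clique {V : Type*} {H : SimpleGraph V} {m : ℕ} {t : Finset V}
    (hcard : t.card = m + 1) (hcl : ∀ x ∈ t, ∀ y ∈ t, x ≠ y → H.Adj x y) :
    HasCopy H (wheelGraph m) := by
  classical
  let e0 : Option (Fin m) → Fin (m + 1) := fun o => o.elim 0 Fin.succ
  have he0 : Function.Injective e0 := by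
    rintro (_ | a) (_ | b) h
    · rfl
    · exact absurd h.symm (Fin.succ_ne_zero b)
    · exact absurd h (Fin.succ_ne_zero a)
    · simpa using Fin.succ_injective m (by simpa [e0] using h)
  let e : Option (Fin m) → V := fun o => (t.equivFin.symm (finCongr hcard.symm (e0 o)) : V)
  have he_mem : ∀ o, e o ∈ t := fun o => (t.equivFin.symm (finCongr hcard.symm (e0 o))).2
  have he_inj : Function.Injective e := by
    intro i j hij
    exact he0 ((finCongr hcard.symm).injective (t.equivFin.symm.injective (Subtype.ext hij)))
  refine ⟨⟨e, ?_⟩, he_inj⟩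
  intro a b hab
  have hne : a ≠ b := (wheelGraph m).ne_of_adj hab
  exact hcl _ (he_mem a) _ (he_mem b) (fun h => hne (he_inj h))

/-- An explicit Ramsey bound: `R(K_{1,n}, W_m) ≤ (m+1)n + m + 2`. -/
lemma isRamsey_big (n m : ℕ) : IsRamsey (_root_.starGraph n) (wheelGraph m) ((m + 1) * n + m + 2) := by
  intro G
  letI : DecidableRel G.Adj := Classical.decRel _
  letI : DecidableRel Gᶜ.Adj := Classical.decRel _
  by_cases hstar : ∃ v, n ≤ G.degree v
  · obtain ⟨v, hv⟩ := hstar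
    exact Or.inl (hasCopy_star_of_degree hv)
  · push_neg at hstar
    right
    have hcard : Fintype.card (Fin ((m + 1) * n + m + 2)) = (m + 1) * n + m + 2 :=
      Fintype.card_fin _
    have hdeg : ∀ v, Fintype.card (Fin ((m + 1) * n + m + 2)) ≤ Gᶜ.degree v + n := by
      intro v
      have h1 : Gᶜ.degree v = Fintype.card (Fin ((m + 1) * n + m + 2)) - 1 - G.degree v := G.degree_compl v
      have h2 := hstar v
      have h3 := G.degree_lt_card_verts v
      have h4 : 0 < n := by omega
      have h5 : n + 1 ≤ (m + 1) * n + m + 2 := by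
        have : 1 * n = n := by ring
        have h6 : 1 * n ≤ (m+1) * n := Nat.mul_le_mul_right n (by omega)
        omega
      omega
    obtain ⟨t, htcard, htcl⟩ := exists_clique Gᶜ n hdeg (m + 1) (by
      intro j hj
      have h6 : j * n ≤ m * n := Nat.mul_le_mul_right n (by omega)
      have h7 : (m + 1) * n = m * n + n := by ring
      omega)
    exact hasCopy_wheel_of_clique htcard htcl

end StarWheelProof

namespace StarWheelProof

section Construction

/-- Disjoint cliques plus a circulant component. -/
def Fg (qc q s : ℕ) (S : Finset (ZMod s)) : SimpleGraph ((Fin qc × Fin q) ⊕ ZMod s) :=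
  SimpleGraph.fromRel (fun u v =>
    match u, v with
    | Sum.inl p, Sum.inl p' => p.1 = p'.1
    | Sum.inr x, Sum.inr y => x - y ∈ S
    | _, _ => False)

/-- Independent set of size `n` joined to `Fg`. -/
def Hg (n qc q s : ℕ) (S : Finset (ZMod s)) :
    SimpleGraph (Fin n ⊕ ((Fin qc × Fin q) ⊕ ZMod s)) :=
  SimpleGraph.fromRel (fun u v =>
    match u, v with
    | Sum.inl _, Sum.inr _ => True
    | Sum.inr a, Sum.inr b => (Fg qc q s S).Adj a b
    | _, _ => False)

variable {n qc q s : ℕ} {S : Finset (ZMod s)}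

lemma fg_adj_ll {p p' : Fin qc × Fin q} :
    (Fg qc q s S).Adj (Sum.inl p) (Sum.inl p') ↔ p ≠ p' ∧ p.1 = p'.1 := by
  simp only [Fg, SimpleGraph.fromRel_adj, ne_eq, Sum.inl.injEq]
  constructor
  · rintro ⟨h1, h2 | h2⟩
    · exact ⟨h1, h2⟩
    · exact ⟨h1, h2.symm⟩
  · rintro ⟨h1, h2⟩
    exact ⟨h1, Or.inl h2⟩

lemma fg_adj_rr {x y : ZMod s} :
    (Fg qc q s S).Adj (Sum.inr x) (Sum.inr y) ↔ x ≠ y ∧ (x - y ∈ S ∨ y - x ∈ S) := by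
  simp only [Fg, SimpleGraph.fromRel_adj, ne_eq, Sum.inr.injEq]

lemma fg_not_lr {p : Fin qc × Fin q} {y : ZMod s} :
    ¬ (Fg qc q s S).Adj (Sum.inl p) (Sum.inr y) := by
  simp [Fg, SimpleGraph.fromRel_adj]

lemma fg_not_rl {x : ZMod s} {p' : Fin qc × Fin q} :
    ¬ (Fg qc q s S).Adj (Sum.inr x) (Sum.inl p') := by
  simp [Fg, SimpleGraph.fromRel_adj]

lemma hg_not_ll {a a' : Fin n} : ¬ (Hg n qc q s S).Adj (Sum.inl a) (Sum.inl a') := by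
  simp [Hg, SimpleGraph.fromRel_adj]

lemma hg_adj_lr {a : Fin n} {u : (Fin qc × Fin q) ⊕ ZMod s} :
    (Hg n qc q s S).Adj (Sum.inl a) (Sum.inr u) := by
  simp [Hg, SimpleGraph.fromRel_adj]

lemma hg_adj_rr {u v : (Fin qc × Fin q) ⊕ ZMod s} :
    (Hg n qc q s S).Adj (Sum.inr u) (Sum.inr v) ↔ (Fg qc q s S).Adj u v := by
  simp only [Hg, SimpleGraph.fromRel_adj, ne_eq, Sum.inr.injEq]
  constructor
  · rintro ⟨h1, h2 | h2⟩
    · exact h2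
    · exact h2.symm
  · intro h
    exact ⟨h.ne, Or.inl h⟩

/-- Generic: if every vertex has ≥ |V| - n guaranteed neighbours in `G`,
then `Gᶜ` has no copy of the star `K_{1,n}`. -/
lemma no_star_aux {V : Type*} [Fintype V] [DecidableEq V] {G : SimpleGraph V} {n : ℕ}
    (hn : 1 ≤ n)
    (h : ∀ v : V, ∃ Nv : Finset V, (∀ y ∈ Nv, G.Adj v y) ∧ Fintype.card V ≤ n + Nv.card) :
    ¬ HasCopy Gᶜ (_root_.starGraph n) := by
  rintro ⟨f, hinj⟩
  obtain ⟨Nv, hNadj, hNcard⟩ := h (f (Sum.inl ()))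
  have hvN : f (Sum.inl ()) ∉ Nv := fun hmem => G.irrefl (hNadj _ hmem)
  have hsub : (Finset.univ : Finset (Fin n)).image (fun i => f (Sum.inr i)) ⊆
      Finset.univ \ insert (f (Sum.inl ())) Nv := by
    intro y hy
    obtain ⟨i, _, rfl⟩ := Finset.mem_image.mp hy
    have hadj : Gᶜ.Adj (f (Sum.inl ())) (f (Sum.inr i)) := f.map_adj (by simp [_root_.starGraph])
    rw [SimpleGraph.compl_adj] at hadj
    simp only [Finset.mem_sdiff, Finset.mem_univ, true_and, Finset.mem_insert]
    push_neg
    exact ⟨fun e => hadj.1 e.symm, fun hmem => hadj.2 (hNadj _ hmem)⟩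
  have hcard1 : ((Finset.univ : Finset (Fin n)).image (fun i => f (Sum.inr i))).card = n := by
    rw [Finset.card_image_of_injective _
      (fun a b hab => by simpa using hinj hab), Finset.card_univ, Fintype.card_fin]
  have h2 := Finset.card_le_card hsub
  have h4 : (Finset.univ \ insert (f (Sum.inl ())) Nv).card
      = Fintype.card V - (Nv.card + 1) := by
    rw [Finset.card_sdiff_of_subset (Finset.subset_univ _),
      Finset.card_insert_of_notMem hvN, Finset.card_univ]
  rw [hcard1, h4] at h2
  omega

/-- The complement of `Hg` has no star, under suitable cardinality hypotheses. -/
lemma no_star {n qc q s : ℕ} {S : Finset (ZMod s)} [NeZero s]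
    (hn : 1 ≤ n) (hb : qc * q + s ≤ n + q - 1) (hq1 : 1 ≤ q)
    (hScard' : q - 1 ≤ S.card) (hS0 : (0 : ZMod s) ∉ S) :
    ¬ HasCopy (Hg n qc q s S)ᶜ (_root_.starGraph n) := by
  apply no_star_aux hn
  have hcW : Fintype.card ((Fin qc × Fin q) ⊕ ZMod s) = qc * q + s := by
    simp [ZMod.card]
  have hcV : Fintype.card (Fin n ⊕ ((Fin qc × Fin q) ⊕ ZMod s)) = n + (qc * q + s) := by
    simp [ZMod.card]
  intro v
  rcases v with a | (p | x)
  · refine ⟨Finset.univ.image Sum.inr, ?_, ?_⟩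
    · intro y hy
      obtain ⟨u, _, rfl⟩ := Finset.mem_image.mp hy
      exact hg_adj_lr
    · rw [Finset.card_image_of_injective _ Sum.inr_injective, Finset.card_univ, hcW, hcV]
  · refine ⟨(Finset.univ.image Sum.inl) ∪
      ((Finset.univ.erase p.2).image (fun b => Sum.inr (Sum.inl (p.1, b)))), ?_, ?_⟩
    · intro y hy
      rcases Finset.mem_union.mp hy with hy | hy
      · obtain ⟨a, _, rfl⟩ := Finset.mem_image.mp hy
        exact hg_adj_lr.symm
      · obtain ⟨b, hb', rfl⟩ := Finset.mem_image.mp hy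
        have hbne : b ≠ p.2 := (Finset.mem_erase.mp hb').1
        apply hg_adj_rr.mpr
        apply fg_adj_ll.mpr
        refine ⟨?_, rfl⟩
        intro hcon
        exact hbne (congrArg Prod.snd hcon.symm)
    · have hdisj : Disjoint ((Finset.univ : Finset (Fin n)).image Sum.inl)
          (((Finset.univ.erase p.2).image (fun b => Sum.inr (Sum.inl (p.1, b)))) : Finset (Fin n ⊕ ((Fin qc × Fin q) ⊕ ZMod s))) := by
        rw [Finset.disjoint_left]
        rintro y hy1 hy2
        obtain ⟨a, _, rfl⟩ := Finset.mem_image.mp hy1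
        obtain ⟨b, _, hb2⟩ := Finset.mem_image.mp hy2
        exact absurd hb2 (by simp)
      have hinj2 : Function.Injective (fun b : Fin q =>
          (Sum.inr (Sum.inl (p.1, b)) : Fin n ⊕ ((Fin qc × Fin q) ⊕ ZMod s))) := by
        intro b b' hb
        simpa using hb
      rw [Finset.card_union_of_disjoint hdisj,
        Finset.card_image_of_injective _ Sum.inl_injective,
        Finset.card_image_of_injective _ hinj2,
        Finset.card_erase_of_mem (Finset.mem_univ _)]
      simp only [Finset.card_univ, Fintype.card_fin, hcV]
      omega
  · refine ⟨(Finset.univ.image Sum.inl) ∪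
      (S.image (fun c => Sum.inr (Sum.inr (x - c)))), ?_, ?_⟩
    · intro y hy
      rcases Finset.mem_union.mp hy with hy | hy
      · obtain ⟨a, _, rfl⟩ := Finset.mem_image.mp hy
        exact hg_adj_lr.symm
      · obtain ⟨c, hc, rfl⟩ := Finset.mem_image.mp hy
        apply hg_adj_rr.mpr
        apply fg_adj_rr.mpr
        constructor
        · intro hcon
          exact hS0 (by rwa [sub_eq_self.mp hcon.symm] at hc)
        · left
          rw [sub_sub_cancel]
          exact hc
    · have hdisj : Disjoint ((Finset.univ : Finset (Fin n)).image Sum.inl)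
          ((S.image (fun c => Sum.inr (Sum.inr (x - c)))) : Finset (Fin n ⊕ ((Fin qc × Fin q) ⊕ ZMod s))) := by
        rw [Finset.disjoint_left]
        rintro y hy1 hy2
        obtain ⟨a, _, rfl⟩ := Finset.mem_image.mp hy1
        obtain ⟨c, _, hc2⟩ := Finset.mem_image.mp hy2
        exact absurd hc2 (by simp)
      have hinj3 : Function.Injective (fun c : ZMod s =>
          (Sum.inr (Sum.inr (x - c)) : Fin n ⊕ ((Fin qc × Fin q) ⊕ ZMod s))) := by
        intro c c' hcc
        have hxc : x - c = x - c' := by simpa using hcc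
        exact sub_right_injective hxc
      rw [Finset.card_union_of_disjoint hdisj,
        Finset.card_image_of_injective _ Sum.inl_injective,
        Finset.card_image_of_injective _ hinj3]
      simp only [Finset.card_univ, Fintype.card_fin, hcV]
      omega

end Construction

end StarWheelProof

namespace StarWheelProof

section NoWheel

lemma cyc_succ_adj {M : ℕ} (i : Fin (M + 2)) : (cycleGraph (M + 2)).Adj i (i + 1) := by
  rw [SimpleGraph.cycleGraph_adj]
  exact Or.inr (add_sub_cancel_left i 1)

lemma card_noconsec {M : ℕ} (P : Finset (Fin (M + 2))) (h : ∀ i ∈ P, i + 1 ∉ P) :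
    2 * P.card ≤ M + 2 := by
  have hinj : Function.Injective (fun i : Fin (M + 2) => i + 1) := add_left_injective 1
  have hdisj : Disjoint (P.image (fun i => i + 1)) P := by
    rw [Finset.disjoint_left]
    rintro a ha haP
    obtain ⟨i, hi, rfl⟩ := Finset.mem_image.mp ha
    exact h i hi haP
  have h1 := Finset.card_le_univ (P.image (fun i => i + 1) ∪ P)
  rw [Finset.card_union_of_disjoint hdisj, Finset.card_image_of_injective _ hinj,
    Fintype.card_fin] at h1
  omega

lemma no_wheel {n qc q s : ℕ} {S : Finset (ZMod s)} [NeZero s] {M : ℕ}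
    (hq : 3 ≤ q) (hM : M + 2 = 2 * q) (hs : s ≤ 2 * q - 1)
    (hScard : S.card ≤ q - 1) (hSneg : ∀ x ∈ S, -x ∈ S) :
    ¬ HasCopy (Hg n qc q s S) (wheelGraph (M + 2)) := by
  rintro ⟨f, hinj⟩
  have hg_inj : Function.Injective (fun i : Fin (M + 2) => f (some i)) :=
    fun i j h => Option.some_injective _ (hinj h)
  have hhub : ∀ i, (Hg n qc q s S).Adj (f none) (f (some i)) := fun i => f.map_adj trivial
  have hgadj : ∀ i : Fin (M + 2), (Hg n qc q s S).Adj (f (some i)) (f (some (i + 1))) :=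
    fun i => f.map_adj (cyc_succ_adj i)
  rcases hcase : f none with a0 | w0
  · -- hub in the independent part: the cycle lies in one component of Fg
    have hW : ∀ i, ∃ u, f (some i) = Sum.inr u := by
      intro i
      have had := hhub i
      rw [hcase] at had
      rcases hgi : f (some i) with a' | u
      · rw [hgi] at had
        exact absurd had hg_not_ll
      · exact ⟨u, rfl⟩
    choose w hw using hW
    set comp : (Fin qc × Fin q) ⊕ ZMod s → ℕ :=
      Sum.elim (fun p => p.1.val) (fun _ => qc) with hcompdef
    set ψ : (Fin qc × Fin q) ⊕ ZMod s → ℕ :=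
      Sum.elim (fun p => p.2.val) (fun x => x.val) with hψdef
    have hcomp_adj : ∀ u v, (Fg qc q s S).Adj u v → comp u = comp v := by
      rintro (p | x) (p' | y) h
      · exact congrArg Fin.val (fg_adj_ll.mp h).2
      · exact absurd h fg_not_lr
      · exact absurd h fg_not_rl
      · rfl
    have hwalk : ∀ j : ℕ, ∀ hj : j < M + 2,
        comp (w ⟨j, hj⟩) = comp (w ⟨0, by omega⟩) := by
      intro j
      induction j with
      | zero => intro hj; rfl
      | succ j ih =>
        intro hj
        have hjm : j < M + 2 := by omega
        have e1 : (⟨j, hjm⟩ : Fin (M + 2)) + 1 = ⟨j + 1, hj⟩ := by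
          have hlt : (⟨j, hjm⟩ : Fin (M + 2)) < Fin.last (M + 1) := by
            rw [Fin.lt_def]
            simp only [Fin.val_last]
            omega
          apply Fin.ext
          rw [Fin.val_add_one_of_lt hlt]
        have hadj := hgadj ⟨j, hjm⟩
        rw [e1, hw, hw] at hadj
        have hfg := hg_adj_rr.mp hadj
        calc comp (w ⟨j + 1, hj⟩) = comp (w ⟨j, hjm⟩) := (hcomp_adj _ _ hfg).symm
          _ = _ := ih hjm
    have hallcomp : ∀ i : Fin (M + 2), comp (w i) = comp (w ⟨0, by omega⟩) := by
      intro i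
      have := hwalk i.val i.isLt
      simpa [Fin.eta] using this
    have hinjψ : Function.Injective (fun i : Fin (M + 2) => ψ (w i)) := by
      intro i j hij
      apply hg_inj
      show f (some i) = f (some j)
      rw [hw i, hw j]
      have hc : comp (w i) = comp (w j) := (hallcomp i).trans (hallcomp j).symm
      simp only at hij
      congr 1
      rcases hwi : w i with p | x <;> rcases hwj : w j with p' | y <;>
        rw [hwi, hwj] at hij hc
      · simp only [hcompdef, hψdef, Sum.elim_inl] at hij hc
        have h1 : p.1 = p'.1 := Fin.val_injective hc
        have h2 : p.2 = p'.2 := Fin.val_injective hij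
        exact congrArg Sum.inl (Prod.ext h1 h2)
      · simp only [hcompdef, Sum.elim_inl, Sum.elim_inr] at hc
        exact absurd hc (by have := p.1.isLt; omega)
      · simp only [hcompdef, Sum.elim_inl, Sum.elim_inr] at hc
        exact absurd hc.symm (by have := p'.1.isLt; omega)
      · simp only [hψdef, Sum.elim_inr] at hij
        exact congrArg Sum.inr (ZMod.val_injective s hij)
    have hT := Finset.card_le_card (show (Finset.univ.image (fun i : Fin (M + 2) => ψ (w i)))
        ⊆ Finset.range (2 * q - 1) by
      intro a ha
      obtain ⟨i, _, rfl⟩ := Finset.mem_image.mp ha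
      rw [Finset.mem_range]
      rcases hwi : w i with p | x
      · simp only [hψdef, Sum.elim_inl]
        have := p.2.isLt
        omega
      · simp only [hψdef, Sum.elim_inr]
        have := ZMod.val_lt x
        omega)
    rw [Finset.card_image_of_injective _ hinjψ, Finset.card_univ, Fintype.card_fin,
      Finset.card_range] at hT
    omega
  · -- hub in F: at most q of the cycle vertices avoid F-neighbours of the hub
    classical
    set P : Finset (Fin (M + 2)) :=
      Finset.univ.filter (fun i => (f (some i)).isLeft) with hPdef
    have hPstep : ∀ i ∈ P, i + 1 ∉ P := by
      intro i hi hni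
      rw [hPdef, Finset.mem_filter] at hi hni
      obtain ⟨a, ha⟩ := Sum.isLeft_iff.mp hi.2
      obtain ⟨a', ha'⟩ := Sum.isLeft_iff.mp hni.2
      have hadj := hgadj i
      rw [ha, ha'] at hadj
      exact hg_not_ll hadj
    have hPcard := card_noconsec P hPstep
    have hMFex : ∃ MF : Finset (Fin n ⊕ ((Fin qc × Fin q) ⊕ ZMod s)),
        (∀ u, (Fg qc q s S).Adj w0 u → Sum.inr u ∈ MF) ∧ MF.card ≤ q - 1 := by
      rcases w0 with p0 | x0
      · refine ⟨(Finset.univ.erase p0.2).image (fun b => Sum.inr (Sum.inl (p0.1, b))), ?_, ?_⟩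
        · rintro (p' | y) hadj
          · have h1 := fg_adj_ll.mp hadj
            apply Finset.mem_image.mpr
            refine ⟨p'.2, ?_, ?_⟩
            · apply Finset.mem_erase.mpr
              refine ⟨?_, Finset.mem_univ _⟩
              intro hcon
              exact h1.1 (Prod.ext h1.2 hcon.symm)
            · rw [show (p0.1, p'.2) = p' from Prod.ext h1.2 rfl]
          · exact absurd hadj fg_not_lr
        · have hinj2 : Function.Injective (fun b : Fin q =>
              (Sum.inr (Sum.inl (p0.1, b)) : Fin n ⊕ ((Fin qc × Fin q) ⊕ ZMod s))) := by
            intro b b' hb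
            simpa using hb
          rw [Finset.card_image_of_injective _ hinj2,
            Finset.card_erase_of_mem (Finset.mem_univ _), Finset.card_univ, Fintype.card_fin]
      · refine ⟨S.image (fun c => Sum.inr (Sum.inr (x0 - c))), ?_, ?_⟩
        · rintro (p' | y) hadj
          · exact absurd hadj fg_not_rl
          · have h1 := fg_adj_rr.mp hadj
            have hmem : x0 - y ∈ S := by
              rcases h1.2 with h2 | h2
              · exact h2
              · have := hSneg _ h2
                rwa [neg_sub] at this
            apply Finset.mem_image.mpr
            exact ⟨x0 - y, hmem, by rw [sub_sub_cancel]⟩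
        · exact le_trans (Finset.card_image_le) hScard
    obtain ⟨MF, hMFmem, hMFcard⟩ := hMFex
    set Q : Finset (Fin (M + 2)) := Finset.univ \ P with hQdef
    have hQsub : Q.image (fun i => f (some i)) ⊆ MF := by
      intro y hy
      obtain ⟨i, hi, rfl⟩ := Finset.mem_image.mp hy
      rw [hQdef, Finset.mem_sdiff, hPdef, Finset.mem_filter] at hi
      have hnl : ¬ (f (some i)).isLeft := fun hl => hi.2 ⟨Finset.mem_univ _, hl⟩
      obtain ⟨u, hu⟩ := Sum.isRight_iff.mp (Sum.not_isLeft.mp hnl)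
      have hadj := hhub i
      rw [hcase, hu] at hadj
      rw [hu]
      exact hMFmem u (hg_adj_rr.mp hadj)
    have hQcard := Finset.card_le_card hQsub
    rw [Finset.card_image_of_injective _ hg_inj, hQdef,
      Finset.card_sdiff_of_subset (Finset.subset_univ _), Finset.card_univ, Fintype.card_fin] at hQcard
    omega

end NoWheel

end StarWheelProof

/-- Lower bound: for even `m` with `6 ≤ m ≤ 2n-2`,
`R(K_{1,n}, W_m) ≥ 2n + m/2 - θ`, where `θ = 1` if both `n` and `m/2` are even
and `θ = 0` otherwise. -/
theorem star_wheel_ramsey_lower (n m : ℕ) (hm6 : 6 ≤ m) (hm : m ≤ 2 * n - 2)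
    (hme : Even m) :
    2 * n + m / 2 - (if Even n ∧ Even (m / 2) then 1 else 0) ≤
      ramseyNumber (_root_.starGraph n) (wheelGraph m) := by
  classical
  have hmq : m = 2 * (m / 2) := by
    rcases hme with ⟨r, hr⟩; omega
  obtain ⟨M, rfl⟩ : ∃ M, m = M + 2 := ⟨m - 2, by omega⟩
  set q := (M + 2) / 2 with hqdef
  have hM2q : M + 2 = 2 * q := by omega
  have hq3 : 3 ≤ q := by omega
  have hn4 : 4 ≤ n := by omega
  set θ : ℕ := if Even n ∧ Even q then 1 else 0 with hθdef
  have hθ1 : θ ≤ 1 := by rw [hθdef]; split <;> omega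
  set b := n + q - θ - 1 with hbdef
  have hq0 : 0 < q := by omega
  have hbq : q ≤ b := by omega
  obtain ⟨D, rr, hb_eq, hrrlt, hD1⟩ : ∃ D rr : ℕ, b = q * D + rr ∧ rr < q ∧ 1 ≤ D :=
    ⟨b / q, b % q, (Nat.div_add_mod b q).symm, Nat.mod_lt _ hq0,
      (Nat.one_le_div_iff hq0).mpr hbq⟩
  set s := if rr = 0 then q else q + rr with hsdef
  set qc := D - 1 with hqcdef
  have hsq : q ≤ s ∧ s ≤ 2 * q - 1 := by rw [hsdef]; split <;> omega
  have hkey : qc * q + s = b := by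
    have h1 : qc * q + q = D * q := by
      have h4 : qc + 1 = D := by omega
      calc qc * q + q = (qc + 1) * q := by ring
        _ = _ := by rw [h4]
    have h2 : D * q = q * D := mul_comm _ _
    rw [hsdef]; split <;> omega
  -- parity: if q - 1 is odd then s is even
  have hparity : (q - 1) % 2 = 1 → s % 2 = 0 := by
    intro hq1
    have hqe : q % 2 = 0 := by omega
    have hbe : b % 2 = 0 := by
      rcases Nat.even_or_odd n with hne | hno
      · have hθv : θ = 1 := by
          rw [hθdef, if_pos ⟨hne, Nat.even_iff.mpr hqe⟩]
        rw [Nat.even_iff] at hne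
        omega
      · have hθv : θ = 0 := by
          rw [hθdef, if_neg]
          rintro ⟨h1, _⟩
          exact (Nat.not_even_iff_odd.mpr hno) h1
        rw [Nat.odd_iff] at hno
        omega
    have hqD : Even (q * D) := (Nat.even_iff.mpr hqe).mul_right D
    rw [Nat.even_iff] at hqD
    have hrre : rr % 2 = 0 := by omega
    rw [hsdef]; split <;> omega
  set k := (q - 1) / 2 with hkdef
  have hk2 : 2 * k + (q - 1) % 2 = q - 1 := by omega
  have hks : 2 * k < s ∧ k ≤ q - 1 := by omega
  haveI : NeZero s := ⟨by omega⟩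
  set O : Finset ℕ := (Finset.Icc 1 k ∪ Finset.Icc (s - k) (s - 1)) ∪
      (if (q - 1) % 2 = 1 then {s / 2} else ∅) with hOdef
  have hOmem : ∀ j, j ∈ O ↔ (1 ≤ j ∧ j ≤ k) ∨ (s - k ≤ j ∧ j ≤ s - 1) ∨
      ((q - 1) % 2 = 1 ∧ j = s / 2) := by
    intro j
    rw [hOdef]
    simp only [Finset.mem_union, Finset.mem_Icc]
    split_ifs with hpar
    · simp [hpar, or_assoc]
    · simp [hpar, or_assoc]
  have hOlt : ∀ j ∈ O, 1 ≤ j ∧ j < s := by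
    intro j hj
    rw [hOmem] at hj
    rcases hj with h | h | h <;> omega
  have hOsym : ∀ j ∈ O, s - j ∈ O := by
    intro j hj
    rw [hOmem] at hj ⊢
    rcases hj with h | h | h
    · exact Or.inr (Or.inl (by omega))
    · exact Or.inl (by omega)
    · have := hparity h.1
      exact Or.inr (Or.inr ⟨h.1, by omega⟩)
  have hc1 : (Finset.Icc 1 k).card = k := by rw [Nat.card_Icc]; omega
  have hc2 : (Finset.Icc (s - k) (s - 1)).card = k := by rw [Nat.card_Icc]; omega
  have hd12 : Disjoint (Finset.Icc 1 k) (Finset.Icc (s - k) (s - 1)) := by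
    rw [Finset.disjoint_left]
    intro j h1 h2
    rw [Finset.mem_Icc] at h1 h2
    omega
  have hcU : (Finset.Icc 1 k ∪ Finset.Icc (s - k) (s - 1)).card = 2 * k := by
    rw [Finset.card_union_of_disjoint hd12, hc1, hc2]; omega
  have hOcard : O.card = q - 1 := by
    rw [hOdef]
    split_ifs with hpar
    · rw [Finset.card_union_of_disjoint, hcU, Finset.card_singleton]
      · omega
      · rw [Finset.disjoint_left]
        intro j h1 h2
        rw [Finset.mem_union, Finset.mem_Icc, Finset.mem_Icc] at h1
        rw [Finset.mem_singleton] at h2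
        have := hparity hpar
        omega
    · rw [Finset.union_empty, hcU]; omega
  set S : Finset (ZMod s) := O.image (fun j : ℕ => (j : ZMod s)) with hSdef
  have hinjO : Set.InjOn (fun j : ℕ => (j : ZMod s)) O := by
    intro j1 h1 j2 h2 he
    have l1 := (hOlt j1 h1).2
    have l2 := (hOlt j2 h2).2
    have hv1 := ZMod.val_cast_of_lt l1
    have hv2 := ZMod.val_cast_of_lt l2
    simp only at he
    rw [← hv1, ← hv2, he]
  have hScard : S.card = q - 1 := by
    rw [hSdef, Finset.card_image_of_injOn hinjO, hOcard]
  have hS0 : (0 : ZMod s) ∉ S := by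
    intro h0
    obtain ⟨j, hj, hj0⟩ := Finset.mem_image.mp h0
    have hlt := (hOlt j hj)
    have hv := ZMod.val_cast_of_lt hlt.2
    rw [hj0, ZMod.val_zero] at hv
    omega
  have hSneg : ∀ x ∈ S, -x ∈ S := by
    intro x hx
    obtain ⟨j, hj, rfl⟩ := Finset.mem_image.mp hx
    apply Finset.mem_image.mpr
    refine ⟨s - j, hOsym j hj, ?_⟩
    have hjle : j ≤ s := le_of_lt (hOlt j hj).2
    rw [Nat.cast_sub hjle, ZMod.natCast_self, zero_sub]
  -- main Ramsey argument
  refine le_csInf ⟨(M + 2 + 1) * n + (M + 2) + 2, ?_⟩ ?_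
  · exact StarWheelProof.isRamsey_big n (M + 2)
  intro r hr
  by_contra hlt
  push_neg at hlt
  have hcV : Fintype.card (Fin n ⊕ ((Fin qc × Fin q) ⊕ ZMod s)) = n + (qc * q + s) := by
    simp [ZMod.card]
  have hrle : Fintype.card (Fin r) ≤ Fintype.card (Fin n ⊕ ((Fin qc × Fin q) ⊕ ZMod s)) := by
    rw [Fintype.card_fin, hcV]
    omega
  obtain ⟨ι⟩ := Function.Embedding.nonempty_of_card_le hrle
  rcases hr ((StarWheelProof.Hg n qc q s S)ᶜ.comap ι) with hstar | hwheel
  · obtain ⟨g, hginj⟩ := hstar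
    have hhom : HasCopy (StarWheelProof.Hg n qc q s S)ᶜ (_root_.starGraph n) := by
      refine ⟨SimpleGraph.Hom.comp ⟨fun x => ι x, fun {a b} h => h⟩ g, ?_⟩
      intro x y hxy
      exact hginj (ι.injective hxy)
    exact StarWheelProof.no_star (by omega) (by omega) (by omega) hScard.ge hS0 hhom
  · obtain ⟨g, hginj⟩ := hwheel
    have hhom : HasCopy (StarWheelProof.Hg n qc q s S) (wheelGraph (M + 2)) := by
      refine ⟨SimpleGraph.Hom.comp ⟨fun x => ι x, ?_⟩ g, ?_⟩
      · intro a b h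
        rw [SimpleGraph.compl_adj] at h
        obtain ⟨hne, hnadj⟩ := h
        by_contra hcon
        exact hnadj (SimpleGraph.compl_adj _ _ _ |>.mpr ⟨fun he => hne (ι.injective he), hcon⟩)
      · intro x y hxy
        exact hginj (ι.injective hxy)
    exact StarWheelProof.no_wheel hq3 hM2q (by omega) hScard.le hSneg hhom
end

section
/- Let m be even with m ≥ 6, let H be an (m/2−1)-regular graph of order N, and let G be the disjoint union of the complement of H and K_n. If the complement of G contains a wheel W_m whose hub x lies in V(H), then since x has only m/2−1 neighbors inside H (in complement(G)), at least m/2+1 of the m rim vertices lie in the K_n-part, forcing two rim vertices that are adjacent on the rim to both lie in the K_n-part; but no two vertices of the K_n-part are adjacent in complement(G), a contradiction. Hence complement(G) contains no W_m with hub in V(H). -/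
open SimpleGraph

/-- Let `m` be even with `m ≥ 6`, let `H` be an `(m/2 - 1)`-regular graph, and let `G` be
the disjoint union of the complement of `H` and `K n`.  Then the complement of `G`
contains no wheel `W m` whose hub lies in `V(H)`. -/
theorem wheel_hub_not_in_H_part {V : Type*} [Fintype V] (n m : ℕ) (hme : Even m)
    (hm6 : 6 ≤ m)
    (H : SimpleGraph V) [DecidableRel H.Adj] (hreg : H.IsRegularOfDegree (m / 2 - 1)) :
    ∀ f : wheelGraph m →g (SimpleGraph.sum Hᶜ (⊤ : SimpleGraph (Fin n)))ᶜ,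
      Function.Injective f → ∀ v : V, f none ≠ Sum.inl v := by
  intro f hf v hv
  have : NeZero m := ⟨by omega⟩
  -- S : rim vertices mapping to the K_n part
  set S : Finset (Fin m) := Finset.univ.filter (fun i => (f (some i)).isRight) with hS
  -- every rim vertex maps to a vertex adjacent to f none = inl v
  have hadj : ∀ i : Fin m, (SimpleGraph.sum Hᶜ (⊤ : SimpleGraph (Fin n)))ᶜ.Adj
      (Sum.inl v) (f (some i)) := by
    intro i
    have := f.map_adj (show (wheelGraph m).Adj none (some i) from trivial)
    rwa [hv] at this
  -- rim vertices mapping to the H part map into H-neighbors of v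
  have hmem : ∀ i : Fin m, i ∉ S → ∃ w, f (some i) = Sum.inl w ∧ H.Adj v w := by
    intro i hi
    simp only [hS, Finset.mem_filter, Finset.mem_univ, true_and, Sum.isRight_iff] at hi
    obtain ⟨w, hw⟩ : ∃ w, f (some i) = Sum.inl w := by
      cases h : f (some i) with
      | inl w => exact ⟨w, rfl⟩
      | inr b => exact absurd ⟨b, h⟩ hi
    refine ⟨w, hw, ?_⟩
    have h2 := hadj i
    rw [hw, compl_adj] at h2
    obtain ⟨hne, hna⟩ := h2
    have hvw : v ≠ w := fun h => hne (by rw [h])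
    by_contra hcon
    exact hna (show Hᶜ.Adj v w from ⟨hvw, hcon⟩)
  -- card bound for Sᶜ
  have hc1 : Sᶜ.card ≤ m / 2 - 1 := by
    have : Sᶜ.card ≤ (H.neighborFinset v).card := by
      apply Finset.card_le_card_of_injOn (fun i => Sum.elim id (fun _ => v) (f (some i)))
      · intro i hi
        rw [Finset.mem_coe, Finset.mem_compl] at hi
        obtain ⟨w, hw, haw⟩ := hmem i hi
        simp only [hw]
        simpa [SimpleGraph.mem_neighborFinset] using haw
      · intro i hi j hj hij
        rw [Finset.mem_coe, Finset.mem_compl] at hi hj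
        obtain ⟨wi, hwi, _⟩ := hmem i hi
        obtain ⟨wj, hwj, _⟩ := hmem j hj
        simp only [hwi, hwj, Sum.elim_inl, id_eq] at hij
        have : f (some i) = f (some j) := by rw [hwi, hwj, hij]
        exact Option.some_injective _ (hf this)
    exact this.trans_eq (hreg v)
  -- hence S is large
  have hcard : S.card + Sᶜ.card = m := by
    rw [Finset.card_add_card_compl]; simp
  have hSbig : m / 2 + 1 ≤ S.card := by omega
  -- no two consecutive rim vertices both in S
  have hnocons : ∀ i : Fin m, i ∈ S → i + 1 ∉ S := by
    intro i hi hi1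
    simp only [hS, Finset.mem_filter, Finset.mem_univ, true_and, Sum.isRight_iff] at hi hi1
    obtain ⟨a, ha⟩ := hi
    obtain ⟨b, hb⟩ := hi1
    have hcyc : (cycleGraph m).Adj i (i + 1) := by
      rw [cycleGraph_adj']
      right
      rw [add_sub_cancel_left, Fin.val_one']
      exact Nat.mod_eq_of_lt (by omega)
    have := f.map_adj (show (wheelGraph m).Adj (some i) (some (i+1)) from hcyc)
    rw [ha, hb] at this
    rw [compl_adj] at this
    obtain ⟨hne, hna⟩ := this
    have hab : a ≠ b := fun h => hne (by rw [h])
    exact hna (show (⊤ : SimpleGraph (Fin n)).Adj a b from hab)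
  -- pigeonhole: i ↦ i+1 maps S injectively into Sᶜ
  have hinj : S.card ≤ Sᶜ.card := by
    apply Finset.card_le_card_of_injOn (fun i => i + 1)
    · intro i hi
      rw [Finset.mem_coe, Finset.mem_compl]
      exact hnocons i hi
    · intro i _ j _ h
      exact add_right_cancel h
  obtain ⟨k, hk⟩ := hme
  omega
end

section
/- Let B be a bipartite graph with partition sets X and Y, 2 ≤ |X| ≤ |Y|. If every vertex x ∈ X satisfies d(x) ≥ max{|X|, |Y|/2 + 1}, then B has a cycle of length 2|X| containing all vertices of X. -/
open SimpleGraph Finset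
set_option linter.unusedSectionVars false
set_option linter.unreachableTactic false
set_option linter.unnecessarySeqFocus false
set_option linter.unusedTactic false
set_option maxHeartbeats 1000000

section JacksonAux


variable {V : Type*} [Fintype V] [DecidableEq V]

/-- cyclic successor index -/
def cyc {r : ℕ} (i : Fin r) (m : ℕ) : Fin r :=
  ⟨(i.val + m) % r, Nat.mod_lt _ (Nat.lt_of_le_of_lt (Nat.zero_le _) i.isLt)⟩

/-- An alternating cycle with `r` vertices in `X` and `r` in `Y`. -/
structure AltCycle (B : SimpleGraph V) (X Y : Finset V) (r : ℕ) where
  xs : Fin r → V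
  ys : Fin r → V
  hx : ∀ i, xs i ∈ X
  hy : ∀ i, ys i ∈ Y
  injx : Function.Injective xs
  injy : Function.Injective ys
  adj1 : ∀ i, B.Adj (xs i) (ys i)
  adj2 : ∀ i, B.Adj (ys i) (xs (cyc i 1))


variable {B : SimpleGraph V} [DecidableRel B.Adj] {X Y : Finset V}

lemma nbr_subset_Y (hdisj : Disjoint X Y)
    (hbip : ∀ a b : V, B.Adj a b → (a ∈ X ∧ b ∈ Y) ∨ (a ∈ Y ∧ b ∈ X))
    {v : V} (hv : v ∈ X) : B.neighborFinset v ⊆ Y := by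
  intro w hw
  rw [mem_neighborFinset] at hw
  rcases hbip v w hw with ⟨_, h⟩ | ⟨h, _⟩
  · exact h
  · exact absurd hv (Finset.disjoint_right.mp hdisj h)

lemma common_two (hdisj : Disjoint X Y)
    (hbip : ∀ a b : V, B.Adj a b → (a ∈ X ∧ b ∈ Y) ∨ (a ∈ Y ∧ b ∈ X))
    (hdeg : ∀ x ∈ X, X.card ≤ B.degree x ∧ Y.card + 2 ≤ 2 * B.degree x)
    {u v : V} (hu : u ∈ X) (hv : v ∈ X) :
    2 ≤ ((B.neighborFinset u) ∩ (B.neighborFinset v)).card := by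
  have hUcard : ((B.neighborFinset u) ∪ (B.neighborFinset v)).card ≤ Y.card := by
    apply Finset.card_le_card
    intro w hw
    rcases Finset.mem_union.mp hw with h | h
    · exact nbr_subset_Y hdisj hbip hu h
    · exact nbr_subset_Y hdisj hbip hv h
  have h1 := (hdeg u hu).2
  have h2 := (hdeg v hv).2
  have key := Finset.card_union_add_card_inter (B.neighborFinset u) (B.neighborFinset v)
  rw [SimpleGraph.degree] at h1 h2
  omega


variable {B : SimpleGraph V} [DecidableRel B.Adj]

structure AltPath (B : SimpleGraph V) (Xp U : Finset V) (t : ℕ) where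
  xs : Fin (t+1) → V
  ys : Fin t → V
  injx : Function.Injective xs
  injy : Function.Injective ys
  imgx : Finset.image xs Finset.univ = Xp
  imgy : Finset.image ys Finset.univ = U
  adj1 : ∀ i : Fin t, B.Adj (xs i.castSucc) (ys i)
  adj2 : ∀ i : Fin t, B.Adj (ys i) (xs i.succ)

variable {B : SimpleGraph V} {Xp U : Finset V} {t : ℕ}

/-- Pósa rotation. -/
def AltPath.rot (p : AltPath B Xp U t) (j : Fin t)
    (hadj : B.Adj (p.xs (Fin.last t)) (p.ys j)) : AltPath B Xp U t where
  xs := fun i => if h : i.val ≤ j.val then p.xs i else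
    p.xs ⟨t + 1 + j.val - i.val, by have := i.isLt; have := j.isLt; omega⟩
  ys := fun i => if h : i.val ≤ j.val then p.ys i else
    p.ys ⟨t + j.val - i.val, by have := i.isLt; have := j.isLt; omega⟩
  injx := by
    intro a b hab
    have ha' := a.isLt; have hb' := b.isLt; have hj' := j.isLt
    dsimp only at hab
    split_ifs at hab with h1 h2 h2 <;>
      [exact p.injx hab;
       (have := congrArg Fin.val (p.injx hab); simp only at this; omega);
       (have := congrArg Fin.val (p.injx hab); simp only at this; omega);
       (have := congrArg Fin.val (p.injx hab); simp only at this; exact Fin.ext (by omega))]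
  injy := by
    intro a b hab
    have ha' := a.isLt; have hb' := b.isLt; have hj' := j.isLt
    dsimp only at hab
    split_ifs at hab with h1 h2 h2 <;>
      [exact p.injy hab;
       (have := congrArg Fin.val (p.injy hab); simp only at this; omega);
       (have := congrArg Fin.val (p.injy hab); simp only at this; omega);
       (have := congrArg Fin.val (p.injy hab); simp only at this; exact Fin.ext (by omega))]
  imgx := by
    refine Finset.Subset.antisymm ?_ ?_ |>.trans p.imgx <;> intro w hw <;>
      simp only [Finset.mem_image, Finset.mem_univ, true_and] at hw ⊢ <;>
      obtain ⟨i, hi⟩ := hw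
    · split_ifs at hi <;> exact ⟨_, hi⟩
    · have hi' := i.isLt; have hj' := j.isLt
      by_cases h : i.val ≤ j.val
      · exact ⟨i, by simpa [h] using hi⟩
      · refine ⟨⟨t + 1 + j.val - i.val, by omega⟩, ?_⟩
        dsimp only; rw [dif_neg (by first | (dsimp only; omega) | omega)]
        rw [← hi]; congr 1; exact Fin.ext (by first | (dsimp only; omega) | omega)
  imgy := by
    refine Finset.Subset.antisymm ?_ ?_ |>.trans p.imgy <;> intro w hw <;>
      simp only [Finset.mem_image, Finset.mem_univ, true_and] at hw ⊢ <;>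
      obtain ⟨i, hi⟩ := hw
    · split_ifs at hi <;> exact ⟨_, hi⟩
    · have hi' := i.isLt; have hj' := j.isLt
      by_cases h : i.val ≤ j.val
      · exact ⟨i, by simpa [h] using hi⟩
      · refine ⟨⟨t + j.val - i.val, by omega⟩, ?_⟩
        dsimp only; rw [dif_neg (by first | (dsimp only; omega) | omega)]
        rw [← hi]; congr 1; exact Fin.ext (by first | (dsimp only; omega) | omega)
  adj1 := by
    intro i
    have hi' := i.isLt; have hj' := j.isLt
    split_ifs with h1 h2 h2
    · exact p.adj1 i
    · simp only [Fin.coe_castSucc] at h1; omega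
    · simp only [Fin.coe_castSucc] at h1; omega
    · simp only [Fin.coe_castSucc] at h1
      have hm : t + j.val - i.val < t := by omega
      have h2' := (p.adj2 ⟨t + j.val - i.val, hm⟩).symm
      convert h2' using 2
      exact Fin.ext (by simp [Fin.val_succ] <;> omega)
  adj2 := by
    intro i
    have hi' := i.isLt; have hj' := j.isLt
    split_ifs with h1 h2 h2
    · -- i ≤ j and i+1 ≤ j : plain
      exact p.adj2 i
    · -- i ≤ j, i+1 > j : i = j, new edge
      simp only [Fin.val_succ] at h2
      have hij : i = j := Fin.ext (by omega)
      subst hij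
      have : (⟨t + 1 + i.val - (i.succ).val, by simp [Fin.val_succ] <;> omega⟩ : Fin (t+1))
          = Fin.last t := Fin.ext (by simp [Fin.val_succ, Fin.val_last] <;> omega)
      rw [this]
      exact hadj.symm
    · simp only [Fin.val_succ] at h2; omega
    · -- i > j : reversed part
      simp only [Fin.val_succ] at h2
      have hm : t + j.val - i.val < t := by omega
      have h1' := (p.adj1 ⟨t + j.val - i.val, hm⟩).symm
      convert h1' using 2
      exact Fin.ext (by simp [Fin.coe_castSucc, Fin.val_succ] <;> omega)

lemma AltPath.rot_zero (p : AltPath B Xp U t) (j : Fin t) (hadj) :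
    (p.rot j hadj).xs 0 = p.xs 0 := by
  dsimp only [AltPath.rot]
  rw [dif_pos (by simp)]
lemma AltPath.rot_last (p : AltPath B Xp U t) (j : Fin t) (hadj) :
    (p.rot j hadj).xs (Fin.last t) = p.xs j.succ := by
  have hj' := j.isLt
  dsimp only [AltPath.rot]
  rw [dif_neg (by simp [Fin.val_last] <;> omega)]
  congr 1
  exact Fin.ext (by simp [Fin.val_succ, Fin.val_last] <;> omega)


lemma cyc_val {r : ℕ} (i : Fin r) (m : ℕ) : (cyc i m).val = (i.val + m) % r := rfl

lemma cyc_cyc {r : ℕ} (i : Fin r) (a b : ℕ) : cyc (cyc i a) b = cyc i (a + b) := by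
  apply Fin.ext
  simp only [cyc_val]
  rw [Nat.mod_add_mod, Nat.add_assoc]

/-- injectivity window for cyclic indices -/
lemma cyc_inj {r : ℕ} (m : Fin r) {a b : ℕ} (ha1 : 1 ≤ a) (ha2 : a ≤ r) (hb1 : 1 ≤ b)
    (hb2 : b ≤ r) (h : cyc m a = cyc m b) : a = b := by
  have hm := m.isLt
  have hv := congrArg Fin.val h
  simp only [cyc_val] at hv
  rcases Nat.lt_or_ge (m.val + a) r with h1 | h1 <;> rcases Nat.lt_or_ge (m.val + b) r with h2 | h2
  · rw [Nat.mod_eq_of_lt h1, Nat.mod_eq_of_lt h2] at hv; omega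
  · rw [Nat.mod_eq_of_lt h1, Nat.mod_eq_sub_mod h2,
      Nat.mod_eq_of_lt (by omega)] at hv; omega
  · rw [Nat.mod_eq_sub_mod h1, Nat.mod_eq_of_lt (by omega), Nat.mod_eq_of_lt h2] at hv; omega
  · rw [Nat.mod_eq_sub_mod h1, Nat.mod_eq_of_lt (by omega), Nat.mod_eq_sub_mod h2,
      Nat.mod_eq_of_lt (by omega)] at hv; omega

/-- reversing an alternating path -/
def AltPath.rev (p : AltPath B Xp U t) : AltPath B Xp U t where
  xs := fun i => p.xs ⟨t - i.val, by have := i.isLt; omega⟩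
  ys := fun i => p.ys ⟨t - 1 - i.val, by have := i.isLt; omega⟩
  injx := by
    intro a b hab
    have ha := a.isLt; have hb := b.isLt
    have := congrArg Fin.val (p.injx hab); simp only at this
    exact Fin.ext (by omega)
  injy := by
    intro a b hab
    have ha := a.isLt; have hb := b.isLt
    have := congrArg Fin.val (p.injy hab); simp only at this
    exact Fin.ext (by omega)
  imgx := by
    refine Finset.Subset.antisymm ?_ ?_ |>.trans p.imgx <;> intro w hw <;>
      simp only [Finset.mem_image, Finset.mem_univ, true_and] at hw ⊢ <;>
      obtain ⟨i, hi⟩ := hw <;> have hii := i.isLt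
    · exact ⟨_, hi⟩
    · refine ⟨⟨t - i.val, by omega⟩, ?_⟩
      rw [← hi]; congr 1; exact Fin.ext (by dsimp only; omega)
  imgy := by
    refine Finset.Subset.antisymm ?_ ?_ |>.trans p.imgy <;> intro w hw <;>
      simp only [Finset.mem_image, Finset.mem_univ, true_and] at hw ⊢ <;>
      obtain ⟨i, hi⟩ := hw <;> have hii := i.isLt
    · exact ⟨_, hi⟩
    · refine ⟨⟨t - 1 - i.val, by omega⟩, ?_⟩
      rw [← hi]; congr 1; exact Fin.ext (by dsimp only; omega)
  adj1 := by
    intro i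
    have hi := i.isLt
    have h := (p.adj2 ⟨t - 1 - i.val, by omega⟩).symm
    convert h using 2
    exact Fin.ext (by simp only [Fin.val_succ, Fin.coe_castSucc]; omega)
  adj2 := by
    intro i
    have hi := i.isLt
    have h := (p.adj1 ⟨t - 1 - i.val, by omega⟩).symm
    convert h using 2
    exact Fin.ext (by simp only [Fin.val_succ, Fin.coe_castSucc]; omega)


lemma AltPath.xs_mem (p : AltPath B Xp U t) (i : Fin (t+1)) : p.xs i ∈ Xp := by
  have h : p.xs i ∈ Finset.image p.xs Finset.univ :=
    Finset.mem_image.mpr ⟨i, Finset.mem_univ _, rfl⟩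
  rwa [p.imgx] at h
lemma AltPath.ys_mem (p : AltPath B Xp U t) (i : Fin t) : p.ys i ∈ U := by
  have h : p.ys i ∈ Finset.image p.ys Finset.univ :=
    Finset.mem_image.mpr ⟨i, Finset.mem_univ _, rfl⟩
  rwa [p.imgy] at h

lemma AltPath.rev_zero (p : AltPath B Xp U t) : p.rev.xs 0 = p.xs (Fin.last t) := by
  dsimp only [AltPath.rev]
  exact congrArg p.xs (Fin.ext (by simp))
lemma AltPath.rev_last (p : AltPath B Xp U t) : p.rev.xs (Fin.last t) = p.xs 0 := by
  dsimp only [AltPath.rev]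
  exact congrArg p.xs (Fin.ext (by simp))

variable {X Y : Finset V} {r : ℕ}

/-- initial path obtained from a cycle `C` plus an outside vertex `x` attached to `C.ys m` -/
def mkInitPath (C : AltCycle B X Y r) (x : V) (m : Fin r)
    (hadj : B.Adj x (C.ys m)) (hx : x ∉ Finset.image C.xs Finset.univ) :
    AltPath B (insert x (Finset.image C.xs Finset.univ)) (Finset.image C.ys Finset.univ) r := by
  have hx' : ∀ i, C.xs i ≠ x := by
    intro i hi
    exact hx (Finset.mem_image.mpr ⟨i, Finset.mem_univ _, hi⟩)
  have hinjx : Function.Injective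
      (fun i : Fin (r+1) => if h : i.val = 0 then x else C.xs (cyc m i.val)) := by
    intro a b hab
    have ha := a.isLt; have hb := b.isLt
    dsimp only at hab
    split_ifs at hab with h1 h2 h2
    · exact Fin.ext (by omega)
    · exact absurd hab.symm (hx' _)
    · exact absurd hab (hx' _)
    · exact Fin.ext (cyc_inj m (by omega) (by omega) (by omega) (by omega) (C.injx hab))
  have hinjy : Function.Injective (fun i : Fin r => C.ys (cyc m i.val)) := by
    intro a b hab
    have ha := a.isLt; have hb := b.isLt
    have h2 := C.injy hab
    have h3 := congrArg Fin.val h2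
    simp only [cyc_val] at h3
    have : (1 + a.val) = (1 + b.val) := by
      rcases Nat.lt_or_ge (m.val + a.val) r with h4 | h4 <;>
        rcases Nat.lt_or_ge (m.val + b.val) r with h5 | h5
      · rw [Nat.mod_eq_of_lt h4, Nat.mod_eq_of_lt h5] at h3; omega
      · rw [Nat.mod_eq_of_lt h4, Nat.mod_eq_sub_mod h5,
          Nat.mod_eq_of_lt (by have := m.isLt; omega)] at h3
        have := m.isLt; omega
      · rw [Nat.mod_eq_sub_mod h4, Nat.mod_eq_of_lt (by have := m.isLt; omega),
          Nat.mod_eq_of_lt h5] at h3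
        have := m.isLt; omega
      · rw [Nat.mod_eq_sub_mod h4, Nat.mod_eq_of_lt (by have := m.isLt; omega),
          Nat.mod_eq_sub_mod h5, Nat.mod_eq_of_lt (by have := m.isLt; omega)] at h3
        omega
    exact Fin.ext (by omega)
  refine ⟨fun i => if h : i.val = 0 then x else C.xs (cyc m i.val),
    fun i => C.ys (cyc m i.val), hinjx, hinjy, ?_, ?_, ?_, ?_⟩
  · apply Finset.eq_of_subset_of_card_le
    · intro w hw
      simp only [Finset.mem_image, Finset.mem_univ, true_and] at hw
      obtain ⟨i, hi⟩ := hw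
      try dsimp only at hi
      split_ifs at hi
      · rw [← hi]; exact Finset.mem_insert_self _ _
      · exact Finset.mem_insert_of_mem (by
          simp only [Finset.mem_image, Finset.mem_univ, true_and]; exact ⟨_, hi⟩)
    · rw [Finset.card_insert_of_notMem hx, Finset.card_image_of_injective _ hinjx,
        Finset.card_image_of_injective _ C.injx]
      simp
  · apply Finset.eq_of_subset_of_card_le
    · intro w hw
      simp only [Finset.mem_image, Finset.mem_univ, true_and] at hw ⊢
      obtain ⟨i, hi⟩ := hw
      exact ⟨_, hi⟩
    · rw [Finset.card_image_of_injective _ hinjy, Finset.card_image_of_injective _ C.injy]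
  · intro i
    have hi := i.isLt
    split_ifs with h1
    · simp only [Fin.coe_castSucc] at h1
      have h0 : cyc m (i.val : ℕ) = m := by
        apply Fin.ext; simp only [cyc_val]; rw [h1]
        simpa using Nat.mod_eq_of_lt m.isLt
      rw [h0]
      exact hadj
    · simp only [Fin.coe_castSucc] at h1
      exact C.adj1 (cyc m i.val)
  · intro i
    have hi := i.isLt
    rw [dif_neg (by simp [Fin.val_succ])]
    have h := C.adj2 (cyc m i.val)
    rw [cyc_cyc] at h
    exact h

/-- closing an alternating path through a fresh vertex `z` gives a longer alternating cycle -/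
def mkCycleOfPath {Xp U : Finset V} {t : ℕ} (p : AltPath B Xp U t) (z : V)
    (hz1 : B.Adj (p.xs (Fin.last t)) z) (hz2 : B.Adj z (p.xs 0)) (hzU : z ∉ U)
    (hXpX : Xp ⊆ X) (hUY : U ⊆ Y) (hzY : z ∈ Y) : AltCycle B X Y (t+1) where
  xs := p.xs
  ys := fun i => if h : i.val < t then p.ys ⟨i.val, h⟩ else z
  hx := fun i => hXpX (p.xs_mem i)
  hy := by
    intro i
    split_ifs with h
    · exact hUY (p.ys_mem _)
    · exact hzY
  injx := p.injx
  injy := by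
    intro a b hab
    have ha := a.isLt; have hb := b.isLt
    dsimp only at hab
    split_ifs at hab with h1 h2 h2
    · have := congrArg Fin.val (p.injy hab); simp only at this; exact Fin.ext this
    · exact absurd (hab ▸ p.ys_mem _) hzU
    · exact absurd (hab ▸ p.ys_mem _) hzU
    · exact Fin.ext (by omega)
  adj1 := by
    intro i
    have hi := i.isLt
    split_ifs with h
    · exact p.adj1 ⟨i.val, h⟩
    · have hit : i = Fin.last t := Fin.ext (by simp [Fin.val_last]; omega)
      rw [hit]
      exact hz1
  adj2 := by
    intro i
    have hi := i.isLt
    split_ifs with h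
    · have := p.adj2 ⟨i.val, h⟩
      convert this using 2
      exact Fin.ext (by
        simp only [cyc_val, Fin.val_succ]
        exact Nat.mod_eq_of_lt (by omega))
    · have h0 : cyc i 1 = (0 : Fin (t+1)) := by
        apply Fin.ext
        simp only [cyc_val]
        have : i.val = t := by omega
        simp [this]
      rw [h0]
      exact hz2

/-- inserting an outside vertex `x` with two fresh common neighbours `z, z'` into a cycle -/
def mkCycleM2 {r : ℕ} (C : AltCycle B X Y r) (hr : 2 ≤ r) (x z z' : V)
    (hxX : x ∈ X) (hzY : z ∈ Y) (hz'Y : z' ∈ Y)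
    (hxC : x ∉ Finset.image C.xs Finset.univ)
    (hzC : z ∉ Finset.image C.ys Finset.univ) (hz'C : z' ∉ Finset.image C.ys Finset.univ)
    (hzz' : z ≠ z')
    (h0z : B.Adj (C.xs ⟨0, by omega⟩) z) (hzx : B.Adj z x) (hxz' : B.Adj x z')
    (hz'1 : B.Adj z' (C.xs ⟨1, by omega⟩)) :
    AltCycle B X Y (r+1) where
  xs := fun i => if h0 : i.val = 0 then x else
    if h : i.val < r then C.xs ⟨i.val, h⟩ else C.xs ⟨0, by omega⟩
  ys := fun i => if h0 : i.val = 0 then z' else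
    if h : i.val < r then C.ys ⟨i.val, h⟩ else z
  hx := by
    intro i; split_ifs <;> [exact hxX; exact C.hx _; exact C.hx _]
  hy := by
    intro i; split_ifs <;> [exact hz'Y; exact C.hy _; exact hzY]
  injx := by
    have hx' : ∀ i, C.xs i ≠ x := fun i hi =>
      hxC (Finset.mem_image.mpr ⟨i, Finset.mem_univ _, hi⟩)
    intro a b hab
    have ha := a.isLt; have hb := b.isLt
    dsimp only at hab
    split_ifs at hab with h1 h2 h3 h3 h4 h5 h5 h6 h6 <;>
      first
        | (exact Fin.ext (by omega))
        | (exact absurd hab.symm (hx' _))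
        | (exact absurd hab (hx' _))
        | (have := congrArg Fin.val (C.injx hab); simp only at this; exact Fin.ext (by omega))
        | (have := congrArg Fin.val (C.injx hab); simp only at this; omega)
  injy := by
    have hz2 : ∀ i, C.ys i ≠ z := fun i hi =>
      hzC (Finset.mem_image.mpr ⟨i, Finset.mem_univ _, hi⟩)
    have hz'2 : ∀ i, C.ys i ≠ z' := fun i hi =>
      hz'C (Finset.mem_image.mpr ⟨i, Finset.mem_univ _, hi⟩)
    intro a b hab
    have ha := a.isLt; have hb := b.isLt
    dsimp only at hab
    split_ifs at hab with h1 h2 h3 h3 h4 h5 h5 h6 h6 <;>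
      first
        | (exact Fin.ext (by omega))
        | (exact absurd hab.symm (hz'2 _))
        | (exact absurd hab (hz'2 _))
        | (exact absurd hab.symm (hz2 _))
        | (exact absurd hab (hz2 _))
        | (exact absurd hab hzz')
        | (exact absurd hab.symm hzz')
        | (have := congrArg Fin.val (C.injy hab); simp only at this; exact Fin.ext (by omega))
        | (have := congrArg Fin.val (C.injy hab); simp only at this; omega)
  adj1 := by
    intro i
    have hi := i.isLt
    split_ifs with h1 h2
    · exact hxz'
    · exact C.adj1 _
    · exact h0z
  adj2 := by
    intro i
    have hi := i.isLt
    rcases Nat.lt_trichotomy i.val r with hlt | heq | hgt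
    · rcases Nat.eq_zero_or_pos i.val with h0 | h0
      · -- i = 0 : z' connects to C.xs 1
        have hc : (cyc i 1).val = 1 := by
          simp only [cyc_val, h0]
          exact Nat.mod_eq_of_lt (by omega)
        rw [dif_pos h0, dif_neg (show ¬(cyc i 1).val = 0 by omega),
          dif_pos (show (cyc i 1).val < r by omega)]
        have he : (⟨(cyc i 1).val, show (cyc i 1).val < r by omega⟩ : Fin r) = ⟨1, by omega⟩ :=
          Fin.ext (by first | (dsimp only; omega) | omega)
        rw [he]
        exact hz'1
      · -- 1 ≤ i < r
        have hc : (cyc i 1).val = i.val + 1 := by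
          simp only [cyc_val]
          exact Nat.mod_eq_of_lt (by omega)
        rw [dif_neg (show ¬i.val = 0 by omega), dif_pos hlt]
        rcases Nat.lt_or_ge (i.val + 1) r with hlt2 | hge2
        · rw [dif_neg (show ¬(cyc i 1).val = 0 by omega),
            dif_pos (show (cyc i 1).val < r by omega)]
          have h := C.adj2 ⟨i.val, hlt⟩
          convert h using 2
          have hR : (cyc (⟨i.val, hlt⟩ : Fin r) 1).val = i.val + 1 := by
            simp only [cyc_val]
            exact Nat.mod_eq_of_lt (by omega)
          refine Fin.ext ?_
          show (cyc i 1).val = (cyc (⟨i.val, hlt⟩ : Fin r) 1).val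
          omega
        · -- i+1 = r : wraps to C.xs 0
          rw [dif_neg (show ¬(cyc i 1).val = 0 by omega),
            dif_neg (show ¬(cyc i 1).val < r by omega)]
          have h := C.adj2 ⟨i.val, hlt⟩
          have e0 : cyc (⟨i.val, hlt⟩ : Fin r) 1 = ⟨0, by omega⟩ := by
            apply Fin.ext
            simp only [cyc_val]
            try dsimp only
            have hh : i.val + 1 = r := by omega
            rw [hh, Nat.mod_self]
          rw [e0] at h
          exact h
    · -- i = r : z connects back to x
      have hc : (cyc i 1).val = 0 := by
        simp only [cyc_val, heq]
        exact Nat.mod_self (r+1)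
      rw [dif_neg (show ¬i.val = 0 by omega), dif_neg (show ¬i.val < r by omega),
        dif_pos hc]
      exact hzx
    · omega

/-- The key step: an alternating cycle through `r < |X|` vertices of `X` can be extended. -/
theorem step_lemma [DecidableRel B.Adj] (hdisj : Disjoint X Y)
    (hbip : ∀ a b : V, B.Adj a b → (a ∈ X ∧ b ∈ Y) ∨ (a ∈ Y ∧ b ∈ X))
    (hdeg : ∀ x ∈ X, X.card ≤ B.degree x ∧ Y.card + 2 ≤ 2 * B.degree x)
    {r : ℕ} (hr2 : 2 ≤ r) (hrk : r < X.card) (C : AltCycle B X Y r) :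
    Nonempty (AltCycle B X Y (r+1)) := by
  classical
  by_contra hno
  -- external vertex
  have hXsub : Finset.image C.xs Finset.univ ⊆ X := by
    intro w hw
    obtain ⟨i, _, rfl⟩ := Finset.mem_image.mp hw
    exact C.hx i
  have hCcard : (Finset.image C.xs Finset.univ).card = r := by
    rw [Finset.card_image_of_injective _ C.injx, Finset.card_univ, Fintype.card_fin]
  obtain ⟨x, hxX, hxC⟩ : ∃ x ∈ X, x ∉ Finset.image C.xs Finset.univ := by
    by_contra hcon
    push_neg at hcon
    have := Finset.card_le_card (fun w hw => hcon w hw)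
    omega
  set Xp : Finset V := insert x (Finset.image C.xs Finset.univ) with hXp
  set U : Finset V := Finset.image C.ys Finset.univ with hU
  have hXpX : Xp ⊆ X := by
    intro w hw
    rcases Finset.mem_insert.mp hw with rfl | hw
    · exact hxX
    · exact hXsub hw
  have hUY : U ⊆ Y := by
    intro w hw
    obtain ⟨i, _, rfl⟩ := Finset.mem_image.mp hw
    exact C.hy i
  have hXpcard : Xp.card = r + 1 := by
    rw [hXp, Finset.card_insert_of_notMem hxC, hCcard]
  have hUcard : U.card = r := by
    rw [hU, Finset.card_image_of_injective _ C.injy, Finset.card_univ, Fintype.card_fin]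
  set N : V → Finset V := fun v => B.neighborFinset v with hN
  have hNY : ∀ v ∈ X, N v ⊆ Y := fun v hv => nbr_subset_Y hdisj hbip hv
  have hN2 : ∀ u ∈ X, ∀ v ∈ X, 2 ≤ ((N u) ∩ (N v)).card :=
    fun u hu v hv => common_two hdisj hbip hdeg hu hv
  have hNk : ∀ v ∈ X, X.card ≤ (N v).card := fun v hv => (hdeg v hv).1
  have hNd : ∀ v ∈ X, Y.card + 2 ≤ 2 * (N v).card := fun v hv => (hdeg v hv).2
  -- end-pair relation
  set EP : V → V → Prop :=
    fun a b => ∃ p : AltPath B Xp U r, p.xs 0 = a ∧ p.xs (Fin.last r) = b with hEP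
  -- K1 : common neighbourhoods of end pairs are trapped in U
  have K1 : ∀ a b, EP a b → (N a) ∩ (N b) ⊆ U := by
    rintro a b ⟨p, rfl, rfl⟩ z hz
    by_contra hzU
    rw [Finset.mem_inter] at hz
    have hz1 : B.Adj (p.xs (Fin.last r)) z := by
      have := hz.2; rw [hN, mem_neighborFinset] at this; exact this
    have hz2 : B.Adj z (p.xs 0) := by
      have := hz.1; rw [hN, mem_neighborFinset] at this; exact this.symm
    have hzY : z ∈ Y := hNY _ (hXpX (p.xs_mem 0)) hz.1
    exact hno ⟨mkCycleOfPath p z hz1 hz2 hzU hXpX hUY hzY⟩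
  -- symmetry and irreflexivity
  have EPsymm : ∀ a b, EP a b → EP b a := by
    rintro a b ⟨p, rfl, rfl⟩
    exact ⟨p.rev, p.rev_zero, p.rev_last⟩
  have EPirr : ∀ a, ¬ EP a a := by
    rintro a ⟨p, h0, hl⟩
    have := congrArg Fin.val (p.injx (h0.trans hl.symm))
    simp [Fin.val_last] at this
    omega
  have EPmemL : ∀ a b, EP a b → a ∈ Xp := by rintro a b ⟨p, rfl, -⟩; exact p.xs_mem 0
  have EPmemR : ∀ a b, EP a b → b ∈ Xp := by rintro a b ⟨p, -, rfl⟩; exact p.xs_mem _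
  -- K2 : rotations give many partners
  have K2 : ∀ a b, EP a b → ((N b) ∩ U).card ≤ (Xp.filter (fun c => EP a c)).card := by
    rintro a b ⟨p, rfl, rfl⟩
    set J : Finset (Fin r) :=
      Finset.univ.filter (fun j => p.ys j ∈ N (p.xs (Fin.last r))) with hJ
    have h1 : (N (p.xs (Fin.last r))) ∩ U = Finset.image (fun j => p.ys j) J := by
      ext y
      constructor
      · intro hy
        rw [Finset.mem_inter] at hy
        have hyU : y ∈ Finset.image p.ys Finset.univ := by rw [p.imgy]; exact hy.2
        obtain ⟨j, -, rfl⟩ := Finset.mem_image.mp hyU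
        exact Finset.mem_image.mpr ⟨j, Finset.mem_filter.mpr ⟨Finset.mem_univ _, hy.1⟩, rfl⟩
      · intro hy
        obtain ⟨j, hj, rfl⟩ := Finset.mem_image.mp hy
        rw [hJ, Finset.mem_filter] at hj
        exact Finset.mem_inter.mpr ⟨hj.2, p.ys_mem j⟩
    rw [h1, Finset.card_image_of_injective _ p.injy]
    have h2 : Finset.image (fun j : Fin r => p.xs j.succ) J ⊆
        Xp.filter (fun c => EP (p.xs 0) c) := by
      intro w hw
      obtain ⟨j, hj, rfl⟩ := Finset.mem_image.mp hw
      rw [hJ, Finset.mem_filter] at hj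
      have hadj : B.Adj (p.xs (Fin.last r)) (p.ys j) := by
        have := hj.2; rw [hN, mem_neighborFinset] at this; exact this
      refine Finset.mem_filter.mpr ⟨p.xs_mem _, ?_⟩
      exact ⟨p.rot j hadj, p.rot_zero j hadj, p.rot_last j hadj⟩
    calc J.card = (Finset.image (fun j : Fin r => p.xs j.succ) J).card :=
          (Finset.card_image_of_injective _ (fun a b hab =>
            Fin.succ_injective _ (p.injx hab))).symm
      _ ≤ _ := Finset.card_le_card h2
  -- K0 : some end pair exists
  have K0 : ∃ a b, EP a b := by
    by_cases hNU : ∃ m : Fin r, B.Adj x (C.ys m)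
    · obtain ⟨m, hm⟩ := hNU
      exact ⟨_, _, ⟨mkInitPath C x m hm hxC, rfl, rfl⟩⟩
    · push_neg at hNU
      have hyC : ∀ z', z' ∈ N x → z' ∉ Finset.image C.ys Finset.univ := by
        intro z' hz' hmem
        obtain ⟨j, -, rfl⟩ := Finset.mem_image.mp hmem
        rw [hN, mem_neighborFinset] at hz'
        exact hNU j hz'
      have h0r : 0 < r := by omega
      have h1r : 1 < r := by omega
      set i0 : Fin r := ⟨0, h0r⟩ with hi0
      set i1 : Fin r := ⟨1, h1r⟩ with hi1
      have hx0 : C.xs i0 ∈ X := C.hx _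
      have hx1 : C.xs i1 ∈ X := C.hx _
      have hA := hN2 x hxX _ hx0
      have hB := hN2 x hxX _ hx1
      have hpos : 0 < ((N x) ∩ (N (C.xs i0))).card := by omega
      obtain ⟨z, hz⟩ := Finset.card_pos.mp hpos
      obtain ⟨z', hz', hzz'⟩ := Finset.exists_mem_ne
        (show 1 < ((N x) ∩ (N (C.xs i1))).card by omega) z
      rw [Finset.mem_inter] at hz hz'
      have hzY : z ∈ Y := hNY x hxX hz.1
      have hz'Y : z' ∈ Y := hNY x hxX hz'.1
      refine absurd ⟨mkCycleM2 C hr2 x z z' hxX hzY hz'Y hxC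
        (hyC z hz.1) (hyC z' hz'.1) (Ne.symm hzz') ?_ ?_ ?_ ?_⟩ hno
      · have := hz.2; rw [hN, mem_neighborFinset] at this; exact this
      · have := hz.1; rw [hN, mem_neighborFinset] at this; exact this.symm
      · have := hz'.1; rw [hN, mem_neighborFinset] at this; exact this
      · have := hz'.2; rw [hN, mem_neighborFinset] at this; exact this.symm
  -- cliques
  set Clq : Finset V → Prop :=
    fun Q => Q ⊆ Xp ∧ ∀ a ∈ Q, ∀ b ∈ Q, a ≠ b → EP a b with hClq
  obtain ⟨a0, b0, hab0⟩ := K0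
  have hne0 : a0 ≠ b0 := by rintro rfl; exact EPirr _ hab0
  have hpair : Clq {a0, b0} := by
    constructor
    · intro w hw
      rcases Finset.mem_insert.mp hw with rfl | hw
      · exact EPmemL _ _ hab0
      · rw [Finset.mem_singleton] at hw; subst hw; exact EPmemR _ _ hab0
    · intro u hu v hv huv
      rcases Finset.mem_insert.mp hu with rfl | hu1 <;>
        rcases Finset.mem_insert.mp hv with rfl | hv1
      · exact absurd rfl huv
      · rw [Finset.mem_singleton] at hv1; subst hv1; exact hab0
      · rw [Finset.mem_singleton] at hu1; subst hu1; exact EPsymm _ _ hab0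
      · rw [Finset.mem_singleton] at hu1 hv1; subst hu1; subst hv1; exact absurd rfl huv
  set 𝒞 : Finset (Finset V) := Xp.powerset.filter Clq with h𝒞
  have h𝒞ne : ({a0, b0} : Finset V) ∈ 𝒞 := by
    rw [h𝒞, Finset.mem_filter, Finset.mem_powerset]
    exact ⟨hpair.1, hpair⟩
  obtain ⟨Q, hQ𝒞, hQmax⟩ := Finset.exists_max_image 𝒞 Finset.card ⟨_, h𝒞ne⟩
  rw [h𝒞, Finset.mem_filter, Finset.mem_powerset] at hQ𝒞
  obtain ⟨hQXp, hQclq⟩ := hQ𝒞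
  set q := Q.card with hq
  have hq2 : 2 ≤ q := by
    have := hQmax _ h𝒞ne
    rw [Finset.card_insert_of_notMem (by simpa using hne0), Finset.card_singleton] at this
    omega
  -- no clique extension
  have hnext : ∀ γ ∈ Xp, ∃ v ∈ Q, ¬ EP v γ := by
    intro γ hγ
    by_contra hcon
    push_neg at hcon
    have hγQ : γ ∉ Q := fun hh => EPirr γ (hcon γ hh)
    have hclq' : Clq (insert γ Q) := by
      constructor
      · intro w hw
        rcases Finset.mem_insert.mp hw with rfl | hw
        · exact hγ
        · exact hQXp hw
      · intro u hu v hv huv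
        rcases Finset.mem_insert.mp hu with rfl | hu1 <;>
          rcases Finset.mem_insert.mp hv with rfl | hv1
        · exact absurd rfl huv
        · exact EPsymm _ _ (hcon v hv1)
        · exact hcon u hu1
        · exact hQclq.2 u hu1 v hv1 huv
    have hmem : insert γ Q ∈ 𝒞 := by
      rw [h𝒞, Finset.mem_filter, Finset.mem_powerset]
      exact ⟨hclq'.1, hclq'⟩
    have := hQmax _ hmem
    rw [Finset.card_insert_of_notMem hγQ] at this
    omega
  -- counting: sum of partner-set sizes is at most (r+1)(q-1)
  have hsum1 : ∑ v ∈ Q, (Xp.filter (fun c => EP v c)).card ≤ (r+1) * (q-1) := by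
    have e1 : ∑ v ∈ Q, (Xp.filter (fun c => EP v c)).card
        = ∑ γ ∈ Xp, (Q.filter (fun v => EP v γ)).card := by
      simp only [Finset.card_filter]
      exact Finset.sum_comm
    rw [e1]
    have e2 : ∀ γ ∈ Xp, (Q.filter (fun v => EP v γ)).card ≤ q - 1 := by
      intro γ hγ
      obtain ⟨v, hv, hnv⟩ := hnext γ hγ
      have hsub : Q.filter (fun v => EP v γ) ⊆ Q.erase v := by
        intro u hu
        rw [Finset.mem_filter] at hu
        rw [Finset.mem_erase]
        exact ⟨fun h => hnv (h ▸ hu.2), hu.1⟩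
      calc (Q.filter (fun v => EP v γ)).card ≤ (Q.erase v).card := Finset.card_le_card hsub
        _ = q - 1 := by rw [Finset.card_erase_of_mem hv]
    calc ∑ γ ∈ Xp, (Q.filter (fun v => EP v γ)).card ≤ ∑ _γ ∈ Xp, (q-1) :=
          Finset.sum_le_sum e2
      _ = (r+1) * (q-1) := by rw [Finset.sum_const, hXpcard, smul_eq_mul]
  -- lower bound via K2
  have hSsum : ∑ v ∈ Q, ((N v) ∩ U).card ≤ (r+1) * (q-1) := by
    have key : ∀ v ∈ Q, ∑ u ∈ Q.erase v, ((N u) ∩ U).card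
        ≤ (q-1) * (Xp.filter (fun c => EP v c)).card := by
      intro v hv
      have hb : ∀ u ∈ Q.erase v, ((N u) ∩ U).card ≤ (Xp.filter (fun c => EP v c)).card := by
        intro u hu
        rw [Finset.mem_erase] at hu
        exact K2 v u (hQclq.2 v hv u hu.2 (Ne.symm hu.1))
      calc ∑ u ∈ Q.erase v, ((N u) ∩ U).card
          ≤ (Q.erase v).card * (Xp.filter (fun c => EP v c)).card := by
            apply Finset.sum_le_card_nsmul _ _ _ (fun u hu => hb u hu)
        _ = (q-1) * _ := by rw [Finset.card_erase_of_mem hv]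
    have lhs : ∑ v ∈ Q, ∑ u ∈ Q.erase v, ((N u) ∩ U).card
        = (q-1) * ∑ v ∈ Q, ((N v) ∩ U).card := by
      have e : ∀ v ∈ Q, ∑ u ∈ Q.erase v, ((N u) ∩ U).card + ((N v) ∩ U).card
          = ∑ u ∈ Q, ((N u) ∩ U).card := fun v hv => Finset.sum_erase_add Q _ hv
      have e2 : ∑ v ∈ Q, (∑ u ∈ Q.erase v, ((N u) ∩ U).card + ((N v) ∩ U).card)
          = q * ∑ u ∈ Q, ((N u) ∩ U).card := by
        rw [Finset.sum_congr rfl e, Finset.sum_const, smul_eq_mul]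
      rw [Finset.sum_add_distrib] at e2
      have hq1 : 1 ≤ q := by omega
      set A := ∑ v ∈ Q, ∑ u ∈ Q.erase v, ((N u) ∩ U).card
      set S := ∑ v ∈ Q, ((N v) ∩ U).card
      have hAS : A + S = q * S := e2
      have hqS : q * S = (q - 1) * S + S := by
        have h : q = (q - 1) + 1 := by omega
        calc q * S = ((q-1)+1) * S := by rw [← h]
          _ = (q-1)*S + S := by ring
      omega
    have rhs : ∑ v ∈ Q, (q-1) * (Xp.filter (fun c => EP v c)).card
        = (q-1) * ∑ v ∈ Q, (Xp.filter (fun c => EP v c)).card := by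
      rw [Finset.mul_sum]
    have h3 : (q-1) * ∑ v ∈ Q, ((N v) ∩ U).card
        ≤ (q-1) * ∑ v ∈ Q, (Xp.filter (fun c => EP v c)).card := by
      rw [← lhs, ← rhs]
      exact Finset.sum_le_sum key
    have h4 := hsum1
    have hq1 : 0 < q - 1 := by omega
    have := Nat.le_of_mul_le_mul_left (by
      calc (q-1) * ∑ v ∈ Q, ((N v) ∩ U).card
          ≤ (q-1) * ∑ v ∈ Q, (Xp.filter (fun c => EP v c)).card := h3
        _ ≤ (q-1) * ((r+1) * (q-1)) := Nat.mul_le_mul_left _ h4) hq1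
    exact this.trans (le_refl _)
  -- disjointness of fresh neighbourhoods
  have hQX : ∀ v ∈ Q, v ∈ X := fun v hv => hXpX (hQXp hv)
  have hWdisj : ∀ a ∈ Q, ∀ b ∈ Q, a ≠ b → Disjoint ((N a) \ U) ((N b) \ U) := by
    intro a ha b hb hab
    rw [Finset.disjoint_left]
    intro z hza hzb
    rw [Finset.mem_sdiff] at hza hzb
    exact hza.2 (K1 a b (hQclq.2 a ha b hb hab) (Finset.mem_inter.mpr ⟨hza.1, hzb.1⟩))
  have hWsum : ∑ v ∈ Q, ((N v) \ U).card ≤ (Y \ U).card := by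
    rw [← Finset.card_biUnion hWdisj]
    apply Finset.card_le_card
    intro z hz
    rw [Finset.mem_biUnion] at hz
    obtain ⟨v, hv, hzv⟩ := hz
    rw [Finset.mem_sdiff] at hzv ⊢
    exact ⟨hNY v (hQX v hv) hzv.1, hzv.2⟩
  -- put all the numbers together
  have hsplit : ∀ v ∈ Q, ((N v) ∩ U).card + ((N v) \ U).card = (N v).card :=
    fun v _ => Finset.card_inter_add_card_sdiff _ _
  set S := ∑ v ∈ Q, ((N v) ∩ U).card with hS
  set W := ∑ v ∈ Q, ((N v) \ U).card with hW
  have hSW : S + W = ∑ v ∈ Q, (N v).card := by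
    rw [hS, hW, ← Finset.sum_add_distrib]
    exact Finset.sum_congr rfl hsplit
  have hDk : q * X.card ≤ ∑ v ∈ Q, (N v).card := by
    calc q * X.card = ∑ _v ∈ Q, X.card := by rw [Finset.sum_const, smul_eq_mul]
      _ ≤ ∑ v ∈ Q, (N v).card := Finset.sum_le_sum (fun v hv => hNk v (hQX v hv))
  have hDd : q * (Y.card + 2) ≤ 2 * ∑ v ∈ Q, (N v).card := by
    calc q * (Y.card + 2) = ∑ _v ∈ Q, (Y.card + 2) := by rw [Finset.sum_const, smul_eq_mul]
      _ ≤ ∑ v ∈ Q, 2 * (N v).card := Finset.sum_le_sum (fun v hv => hNd v (hQX v hv))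
      _ = 2 * ∑ v ∈ Q, (N v).card := by rw [← Finset.mul_sum]
  have hrY : r ≤ Y.card := by
    calc r = U.card := hUcard.symm
      _ ≤ Y.card := Finset.card_le_card hUY
  have hYU : (Y \ U).card + r = Y.card := by
    rw [Finset.card_sdiff_of_subset hUY, hUcard]
    omega
  -- final arithmetic
  set k := X.card with hk
  set yc := Y.card with hyc
  set D := ∑ v ∈ Q, (N v).card with hD
  have hkr : r + 1 ≤ k := hrk
  have hWyc : W + r ≤ yc := by omega
  clear_value q
  obtain ⟨q', rfl⟩ : ∃ q', q = q' + 2 := ⟨q - 2, by omega⟩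
  have hS' : S ≤ (r+1) * (q'+1) := by
    have : q' + 2 - 1 = q' + 1 := by omega
    rwa [this] at hSsum
  rcases Nat.eq_zero_or_pos q' with rfl | hq1
  · -- q = 2
    have e1 : (0+2) * (yc+2) = 2*yc+4 := by ring
    have e2 : (r+1) * (0+1) = r+1 := by ring
    have e3 : (0+2) * k = 2*k := by ring
    omega
  · -- q ≥ 3 : first derive yc + 1 ≤ 2r
    have hyc2r : yc + 1 ≤ 2 * r := by
      by_contra hcon
      push_neg at hcon
      have key : (q'+2)*(yc+2) + 2*r ≤ 2*((r+1)*(q'+1)) + 2*yc := by omega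
      have e1 : (q'+2)*(yc+2) = q'*yc + 2*q' + 2*yc + 4 := by ring
      have e2 : 2*((r+1)*(q'+1)) = 2*(r*q') + 2*r + 2*q' + 2 := by ring
      have h2r : 2*r ≤ yc := by omega
      have e4 : q'*(2*r) ≤ q'*yc := Nat.mul_le_mul_left _ h2r
      have e5 : q'*(2*r) = 2*(r*q') := by ring
      omega
    -- then contradiction with the degree bound d ≥ k
    have e5 : (q'+2)*k = q'*k + 2*k := by ring
    have e6 : (r+1)*(q'+1) = r*q' + r + q' + 1 := by ring
    have e7 : q'*(r+1) ≤ q'*k := Nat.mul_le_mul_left _ hkr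
    have e8 : q'*(r+1) = r*q' + q' := by ring
    omega

/-- base case: a 4-cycle through two vertices of `X` -/
theorem base_case [DecidableRel B.Adj] (hdisj : Disjoint X Y)
    (hbip : ∀ a b : V, B.Adj a b → (a ∈ X ∧ b ∈ Y) ∨ (a ∈ Y ∧ b ∈ X))
    (hdeg : ∀ x ∈ X, X.card ≤ B.degree x ∧ Y.card + 2 ≤ 2 * B.degree x)
    (hX2 : 2 ≤ X.card) : Nonempty (AltCycle B X Y 2) := by
  obtain ⟨x1, hx1, x2, hx2, hne⟩ := Finset.one_lt_card.mp (by omega : 1 < X.card)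
  have h2 := common_two hdisj hbip hdeg hx1 hx2
  obtain ⟨w, hw⟩ := Finset.card_pos.mp (by omega :
    0 < ((B.neighborFinset x1) ∩ (B.neighborFinset x2)).card)
  obtain ⟨w', hw', hww'⟩ := Finset.exists_mem_ne
    (show 1 < ((B.neighborFinset x1) ∩ (B.neighborFinset x2)).card by omega) w
  rw [Finset.mem_inter, mem_neighborFinset, mem_neighborFinset] at hw hw'
  refine ⟨⟨![x1, x2], ![w, w'], ?_, ?_, ?_, ?_, ?_, ?_⟩⟩
  · intro i
    fin_cases i <;> simpa using (by assumption)
  · intro i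
    have hwY : w ∈ Y := nbr_subset_Y hdisj hbip hx1 (mem_neighborFinset _ _ _ |>.mpr hw.1)
    have hw'Y : w' ∈ Y := nbr_subset_Y hdisj hbip hx1 (mem_neighborFinset _ _ _ |>.mpr hw'.1)
    fin_cases i <;> simpa using (by assumption)
  · intro a b hab
    fin_cases a <;> fin_cases b <;> simp_all <;> exact absurd hab (by simpa using hne)
  · intro a b hab
    fin_cases a <;> fin_cases b <;> simp_all <;> exact absurd hab (by simpa using hww')
  · intro i
    fin_cases i
    · simpa using hw.1
    · simpa using hw'.2
  · intro i
    fin_cases i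
    · have : cyc (0 : Fin 2) 1 = 1 := rfl
      simpa [this] using hw.2.symm
    · have : cyc (1 : Fin 2) 1 = 0 := rfl
      simpa [this] using hw'.1.symm

/-- existence of a cycle through all of `X` -/
theorem full_cycle [DecidableRel B.Adj] (hdisj : Disjoint X Y)
    (hbip : ∀ a b : V, B.Adj a b → (a ∈ X ∧ b ∈ Y) ∨ (a ∈ Y ∧ b ∈ X))
    (hdeg : ∀ x ∈ X, X.card ≤ B.degree x ∧ Y.card + 2 ≤ 2 * B.degree x)
    (hX2 : 2 ≤ X.card) : Nonempty (AltCycle B X Y X.card) := by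
  have key : ∀ m, 2 ≤ m → m ≤ X.card → Nonempty (AltCycle B X Y m) := by
    intro m hm
    induction m, hm using Nat.le_induction with
    | base => intro _; exact base_case hdisj hbip hdeg hX2
    | succ n hn ih =>
      intro hnk
      obtain ⟨C⟩ := ih (by omega)
      exact step_lemma hdisj hbip hdeg hn (by omega) C
  exact key X.card hX2 le_rfl

lemma cyc_zero {r : ℕ} (s : Fin r) : cyc s 0 = s := by
  apply Fin.ext
  simp only [cyc_val, Nat.add_zero]
  exact Nat.mod_eq_of_lt s.isLt

/-- cyclic injectivity on the window `[0, r)` -/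
lemma cyc_inj0 {r : ℕ} (m : Fin r) {a b : ℕ} (ha : a < r) (hb : b < r)
    (h : cyc m a = cyc m b) : a = b := by
  have hm := m.isLt
  have hv := congrArg Fin.val h
  simp only [cyc_val] at hv
  rcases Nat.lt_or_ge (m.val + a) r with h1 | h1 <;> rcases Nat.lt_or_ge (m.val + b) r with h2 | h2
  · rw [Nat.mod_eq_of_lt h1, Nat.mod_eq_of_lt h2] at hv; omega
  · rw [Nat.mod_eq_of_lt h1, Nat.mod_eq_sub_mod h2,
      Nat.mod_eq_of_lt (by omega)] at hv; omega
  · rw [Nat.mod_eq_sub_mod h1, Nat.mod_eq_of_lt (by omega), Nat.mod_eq_of_lt h2] at hv; omega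
  · rw [Nat.mod_eq_sub_mod h1, Nat.mod_eq_of_lt (by omega), Nat.mod_eq_sub_mod h2,
      Nat.mod_eq_of_lt (by omega)] at hv; omega

variable {k : ℕ}

/-- the walk along an alternating cycle -/
def cycWalk (C : AltCycle B X Y k) : (c : ℕ) → (s e : Fin k) → (cyc s c = e) →
    B.Walk (C.xs s) (C.xs e)
  | 0, s, e, he => (Walk.nil : B.Walk (C.xs e) (C.xs e)).copy
      (congrArg C.xs (by rw [← he, cyc_zero])) rfl
  | c+1, s, e, he => Walk.cons (C.adj1 s) (Walk.cons (C.adj2 s)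
      (cycWalk C c (cyc s 1) e (by rw [cyc_cyc, Nat.add_comm]; exact he)))

lemma cycWalk_length (C : AltCycle B X Y k) :
    ∀ (c : ℕ) (s e : Fin k) (he : cyc s c = e), (cycWalk C c s e he).length = 2 * c := by
  intro c
  induction c with
  | zero => intro s e he; simp [cycWalk]
  | succ n ih =>
    intro s e he
    simp only [cycWalk, Walk.length_cons, ih]
    omega

lemma cycWalk_support (C : AltCycle B X Y k) :
    ∀ (c : ℕ) (s e : Fin k) (he : cyc s c = e), (cycWalk C c s e he).support
      = ((List.range c).flatMap fun j => [C.xs (cyc s j), C.ys (cyc s j)]) ++ [C.xs e] := by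
  intro c
  induction c with
  | zero => intro s e he; simp [cycWalk]
  | succ n ih =>
    intro s e he
    simp only [cycWalk, Walk.support_cons, ih]
    rw [List.range_succ_eq_map, List.flatMap_cons, List.flatMap_map]
    have hfun : (fun j => [C.xs (cyc (cyc s 1) j), C.ys (cyc (cyc s 1) j)]) ∘ Nat.succ
        = fun j => [C.xs (cyc (cyc s 1) j.succ), C.ys (cyc (cyc s 1) j.succ)] := rfl
    have hfun2 : (fun j => [C.xs (cyc (cyc s 1) j), C.ys (cyc (cyc s 1) j)])
        = (fun j => [C.xs (cyc s (j+1)), C.ys (cyc s (j+1))]) := by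
      funext j
      rw [cyc_cyc, Nat.add_comm]
    rw [hfun2]
    simp only [cyc_zero]
    have : ((List.range n).flatMap fun a => [C.xs (cyc s (Nat.succ a + 1)), C.ys (cyc s (Nat.succ a + 1))])
        = (List.range n).flatMap ((fun j => [C.xs (cyc s (j+1)), C.ys (cyc s (j+1))]) ∘ Nat.succ) := rfl
    simp [Function.comp]

theorem toWalkCycle [DecidableRel B.Adj] (hdisj : Disjoint X Y) (hk : 2 ≤ k)
    (C : AltCycle B X Y k) (himg : Finset.image C.xs Finset.univ = X) :
    ∃ (v : V) (c : B.Walk v v), c.IsCycle ∧ c.length = 2 * k ∧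
      ∀ x ∈ X, x ∈ c.support := by
  have hxy : ∀ i j, C.xs i ≠ C.ys j := by
    intro i j h
    exact absurd (C.hx i) (Finset.disjoint_right.mp hdisj (h ▸ C.hy j))
  obtain ⟨m, rfl⟩ : ∃ m, k = m + 1 := ⟨k - 1, by omega⟩
  have hk0 : 0 < m + 1 := by omega
  set i0 : Fin (m+1) := ⟨0, hk0⟩ with hi0
  have hm1 : 1 < m + 1 := by omega
  have hcyc0 : cyc i0 (m+1) = i0 := by
    apply Fin.ext
    show (0 + (m+1)) % (m+1) = 0
    rw [Nat.zero_add, Nat.mod_self]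
  -- index helpers
  have hc1 : ∀ j : ℕ, cyc (cyc i0 1) j = cyc i0 (1 + j) := fun j => cyc_cyc i0 1 j
  have hcv : ∀ a : ℕ, a < m + 1 → (cyc i0 a).val = a := by
    intro a ha
    show (0 + a) % (m+1) = a
    rw [Nat.zero_add, Nat.mod_eq_of_lt ha]
  have hinj0 : ∀ a b : ℕ, a < m + 1 → b < m + 1 → cyc i0 a = cyc i0 b → a = b :=
    fun a b ha hb h => cyc_inj0 i0 ha hb h
  set rest := cycWalk C m (cyc i0 1) i0
    (by rw [cyc_cyc, Nat.add_comm 1 m]; exact hcyc0) with hrest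
  set q := Walk.cons (C.adj2 i0) rest with hq
  have hw : cycWalk C (m+1) i0 i0 hcyc0 = Walk.cons (C.adj1 i0) q := rfl
  -- support of rest
  have hrsupp : rest.support
      = ((List.range m).flatMap fun j => [C.xs (cyc (cyc i0 1) j), C.ys (cyc (cyc i0 1) j)])
        ++ [C.xs i0] := cycWalk_support C m _ _ _
  -- membership in the segment
  have hmem : ∀ z, z ∈ ((List.range m).flatMap
      fun j => [C.xs (cyc (cyc i0 1) j), C.ys (cyc (cyc i0 1) j)]) →
      ∃ j, j < m ∧ (z = C.xs (cyc i0 (1+j)) ∨ z = C.ys (cyc i0 (1+j))) := by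
    intro z hz
    rw [List.mem_flatMap] at hz
    obtain ⟨j, hj, hzj⟩ := hz
    rw [List.mem_range] at hj
    refine ⟨j, hj, ?_⟩
    rw [hc1] at hzj
    simpa using hzj
  have hxs_notin : C.xs i0 ∉ ((List.range m).flatMap
      fun j => [C.xs (cyc (cyc i0 1) j), C.ys (cyc (cyc i0 1) j)]) := by
    intro hmem'
    obtain ⟨j, hj, h | h⟩ := hmem _ hmem'
    · have := hinj0 0 (1+j) (by omega) (by omega) (by
        rw [cyc_zero]
        exact C.injx h)
      omega
    · exact hxy _ _ h
  have hys_notin : C.ys i0 ∉ ((List.range m).flatMap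
      fun j => [C.xs (cyc (cyc i0 1) j), C.ys (cyc (cyc i0 1) j)]) := by
    intro hmem'
    obtain ⟨j, hj, h | h⟩ := hmem _ hmem'
    · exact hxy _ _ h.symm
    · have := hinj0 0 (1+j) (by omega) (by omega) (by
        rw [cyc_zero]
        exact C.injy h)
      omega
  -- nodup of the segment
  have hseg_nodup : ((List.range m).flatMap
      fun j => [C.xs (cyc (cyc i0 1) j), C.ys (cyc (cyc i0 1) j)]).Nodup := by
    rw [List.nodup_flatMap]
    constructor
    · intro j hj
      simp only [List.nodup_cons, List.mem_singleton, List.nodup_nil, and_true]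
      exact ⟨hxy _ _, by simp⟩
    · rw [List.pairwise_iff_getElem]
      intro a b ha hb hab
      simp only [List.length_range] at ha hb
      simp only [List.getElem_range]
      intro z hz1 hz2
      simp only [Function.onFun, List.mem_cons, List.mem_singleton, List.not_mem_nil,
        or_false] at hz1 hz2
      rw [hc1] at hz1 hz2
      rcases hz1 with rfl | rfl <;> rcases hz2 with h2 | h2
      · have := hinj0 (1+a) (1+b) (by omega) (by omega) (C.injx h2)
        omega
      · exact hxy _ _ h2
      · exact hxy _ _ h2.symm
      · have := hinj0 (1+a) (1+b) (by omega) (by omega) (C.injy h2)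
        omega
  -- q is a path
  have hqsupp : q.support = C.ys i0 :: (((List.range m).flatMap
      fun j => [C.xs (cyc (cyc i0 1) j), C.ys (cyc (cyc i0 1) j)]) ++ [C.xs i0]) := by
    rw [hq, Walk.support_cons, hrsupp]
  have hqpath : q.IsPath := by
    rw [Walk.isPath_def, hqsupp]
    rw [List.nodup_cons]
    constructor
    · intro hmem'
      rcases List.mem_append.mp hmem' with h | h
      · exact hys_notin h
      · rw [List.mem_singleton] at h
        exact hxy _ _ h.symm
    · rw [List.nodup_append]
      refine ⟨hseg_nodup, List.nodup_singleton _, ?_⟩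
      intro z hz1 w hz2
      rw [List.mem_singleton] at hz2
      subst hz2
      exact fun h => hxs_notin (h ▸ hz1)
  -- the closing edge is fresh
  have hedge : s(C.xs i0, C.ys i0) ∉ q.edges := by
    rw [hq, Walk.edges_cons]
    intro hmem'
    rcases List.mem_cons.mp hmem' with h | h
    · rw [Sym2.eq_iff] at h
      rcases h with ⟨h1, -⟩ | ⟨h1, -⟩
      · exact hxy _ _ h1
      · have := hinj0 0 1 (by omega) (by omega) (by
          rw [cyc_zero]
          exact C.injx h1)
        omega
    · have := Walk.snd_mem_support_of_mem_edges rest h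
      rw [hrsupp] at this
      rcases List.mem_append.mp this with h2 | h2
      · exact hys_notin h2
      · rw [List.mem_singleton] at h2
        exact hxy _ _ h2.symm
  refine ⟨C.xs i0, cycWalk C (m+1) i0 i0 hcyc0, ?_, ?_, ?_⟩
  · rw [hw]
    exact (Walk.cons_isCycle_iff q (C.adj1 i0)).mpr ⟨hqpath, hedge⟩
  · rw [cycWalk_length]
  · intro x hx
    rw [← himg] at hx
    obtain ⟨i, -, rfl⟩ := Finset.mem_image.mp hx
    rw [cycWalk_support]
    rw [List.mem_append, List.mem_flatMap]
    left
    refine ⟨i.val, by rw [List.mem_range]; exact i.isLt, ?_⟩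
    have : cyc i0 i.val = i := Fin.ext (hcv i.val i.isLt)
    rw [this]
    simp

end JacksonAux

/-- Jackson's theorem.  Let `B` be a bipartite graph with partition sets `X` and `Y`,
`2 ≤ |X| ≤ |Y|`.  If every vertex `x ∈ X` has degree at least `max {|X|, |Y|/2 + 1}`,
then `B` has a cycle of length `2|X|` containing all vertices of `X`. -/
theorem jackson_bipartite_cycle {V : Type*} [Fintype V] [DecidableEq V]
    (B : SimpleGraph V) [DecidableRel B.Adj] (X Y : Finset V)
    (hdisj : Disjoint X Y)
    (hbip : ∀ a b : V, B.Adj a b → (a ∈ X ∧ b ∈ Y) ∨ (a ∈ Y ∧ b ∈ X))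
    (hX2 : 2 ≤ X.card) (hXY : X.card ≤ Y.card)
    (hdeg : ∀ x ∈ X, X.card ≤ B.degree x ∧ Y.card + 2 ≤ 2 * B.degree x) :
    ∃ (v : V) (c : B.Walk v v), c.IsCycle ∧ c.length = 2 * X.card ∧
      ∀ x ∈ X, x ∈ c.support := by
  obtain ⟨C⟩ := full_cycle hdisj hbip hdeg hX2
  have hXsub : Finset.image C.xs Finset.univ ⊆ X := by
    intro w hw
    obtain ⟨i, -, rfl⟩ := Finset.mem_image.mp hw
    exact C.hx i
  have himg : Finset.image C.xs Finset.univ = X := by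
    apply Finset.eq_of_subset_of_card_le hXsub
    rw [Finset.card_image_of_injective _ C.injx, Finset.card_univ, Fintype.card_fin]
  exact toWalkCycle hdisj hX2 C himg
end

section
/- Let G be a graph of order ν with δ(G) ≥ n + m/2 − θ, u a vertex of G, H = G[N(u)], I = V(G) \ ({u} ∪ N(u)), and D an induced subgraph of H with ν(D) ≤ (ν(H)+ε)/2 for ε ∈ {0,1}. If v, w ∈ V(D) satisfy d_H(v) ≤ ν(D) − 1 and d_H(w) ≤ ν(D) − 1 (i.e., all their H-neighbors lie in D), then |N_I(v) ∩ N_I(w)| ≥ 2δ(G) − ν(G) + 1 − ε. In particular, when ν(G) = 2n + m/2 − θ this bound equals m/2 + 1 − θ − ε ≥ m/2 − 1. -/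
open SimpleGraph

/-- Let `G` have minimum degree at least `n + m/2 - θ`, let `u` be a vertex,
`H = G[N(u)]`, `I = V(G) \ ({u} ∪ N(u))`, and let `D ⊆ N(u)` with
`ν(D) ≤ (ν(H) + ε)/2`, `ε ∈ {0,1}`.  If `v, w ∈ D` have all their `H`-degrees at most
`ν(D) - 1`, then `|N_I(v) ∩ N_I(w)| ≥ 2δ(G) - ν(G) + 1 - ε`; in particular, when
`ν(G) = 2n + m/2 - θ` this bound is at least `m/2 + 1 - θ - ε ≥ m/2 - 1`. -/
theorem common_neighbors_in_I {V : Type*} [Fintype V] [DecidableEq V] [Nonempty V]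
    (G : SimpleGraph V) [DecidableRel G.Adj] (n m θ ε : ℕ) (hθ : θ ≤ 1) (hε : ε ≤ 1)
    (hme : Even m)
    (hδ : n + m / 2 - θ ≤ G.minDegree)
    (u : V) (D : Set V) (hD : D ⊆ G.neighborSet u)
    (hDsize : 2 * D.ncard ≤ (G.neighborSet u).ncard + ε)
    (v w : V) (hv : v ∈ D) (hw : w ∈ D)
    (hvH : (G.neighborSet v ∩ G.neighborSet u).ncard ≤ D.ncard - 1)
    (hwH : (G.neighborSet w ∩ G.neighborSet u).ncard ≤ D.ncard - 1) :
    (2 * (G.minDegree : ℤ) - Fintype.card V + 1 - ε ≤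
      ((G.neighborSet v ∩ G.neighborSet w ∩ (insert u (G.neighborSet u))ᶜ).ncard : ℤ)) ∧
    (Fintype.card V = 2 * n + m / 2 - θ →
      ((m : ℤ) / 2 + 1 - θ - ε ≤
        ((G.neighborSet v ∩ G.neighborSet w ∩ (insert u (G.neighborSet u))ᶜ).ncard : ℤ))) := by
  classical
  set N := G.neighborSet u with hN
  set I := (insert u N)ᶜ with hI
  -- D is nonempty, so 1 ≤ D.ncard
  have hDpos : 1 ≤ D.ncard := (Set.ncard_pos (Set.toFinite D)).2 ⟨v, hv⟩
  -- ncard of neighbor set = degree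
  have hdeg : ∀ x : V, (G.neighborSet x).ncard = G.degree x := by
    intro x
    rw [Set.ncard_eq_toFinset_card']
    rfl
  have huN : u ∉ N := fun h => G.irrefl h
  -- key degree bound for x ∈ D with all H-neighbors in D
  have key : ∀ x : V, x ∈ D → (G.neighborSet x ∩ N).ncard ≤ D.ncard - 1 →
      (G.minDegree : ℕ) ≤ (G.neighborSet x ∩ I).ncard + D.ncard := by
    intro x hx hxH
    have hux : u ∈ G.neighborSet x := by
      have : x ∈ G.neighborSet u := hD hx
      exact (G.mem_neighborSet x u).2 ((G.mem_neighborSet u x).1 this).symm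
    have hsplit : (G.neighborSet x ∩ insert u N).ncard
        + (G.neighborSet x \ insert u N).ncard = (G.neighborSet x).ncard :=
      Set.ncard_inter_add_ncard_diff_eq_ncard _ _ (Set.toFinite _)
    have heq1 : G.neighborSet x ∩ insert u N = insert u (G.neighborSet x ∩ N) := by
      ext y
      simp only [Set.mem_inter_iff, Set.mem_insert_iff]
      constructor
      · rintro ⟨h1, h2 | h2⟩
        · exact Or.inl h2
        · exact Or.inr ⟨h1, h2⟩
      · rintro (rfl | ⟨h1, h2⟩)
        · exact ⟨hux, Or.inl rfl⟩
        · exact ⟨h1, Or.inr h2⟩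
    have hnotmem : u ∉ G.neighborSet x ∩ N := fun h => huN h.2
    have heq2 : (G.neighborSet x ∩ insert u N).ncard = (G.neighborSet x ∩ N).ncard + 1 := by
      rw [heq1, Set.ncard_insert_of_notMem hnotmem (Set.toFinite _)]
    have heq3 : G.neighborSet x \ insert u N = G.neighborSet x ∩ I := by
      rw [hI, Set.diff_eq]
    rw [heq3] at hsplit
    have hmin : G.minDegree ≤ (G.neighborSet x).ncard := by
      rw [hdeg]
      exact G.minDegree_le_degree x
    omega
  have hkv := key v hv hvH
  have hkw := key w hw hwH
  -- inclusion-exclusion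
  set X := G.neighborSet v ∩ I with hX
  set Y := G.neighborSet w ∩ I with hY
  have hsetEq : G.neighborSet v ∩ G.neighborSet w ∩ I = X ∩ Y := by
    ext y
    simp only [hX, hY, Set.mem_inter_iff]
    tauto
  have hIE : (X ∪ Y).ncard + (X ∩ Y).ncard = X.ncard + Y.ncard :=
    Set.ncard_union_add_ncard_inter X Y (Set.toFinite _) (Set.toFinite _)
  have hsub : (X ∪ Y).ncard ≤ I.ncard := by
    apply Set.ncard_le_ncard _ (Set.toFinite _)
    rw [hX, hY]
    exact Set.union_subset Set.inter_subset_right Set.inter_subset_right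
  have hIcard : (insert u N).ncard + I.ncard = Fintype.card V := by
    rw [hI, ← Nat.card_eq_fintype_card]
    exact Set.ncard_add_ncard_compl _ (Set.toFinite _) (Set.toFinite _)
  have hNins : (insert u N).ncard = N.ncard + 1 :=
    Set.ncard_insert_of_notMem huN (Set.toFinite _)
  have hm2 : m % 2 = 0 := Nat.even_iff.1 hme
  rw [hsetEq]
  constructor
  · omega
  · intro hV
    omega
end
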